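/- arXiv:2407.21755 — 7 statements merged into one kernel-verified Lean document; each statement's English description precedes it below -/
import Mathlib

section
/- Let n and k be positive integers with k not dividing n, and write n = mk + j with 1 ≤ j ≤ k - 1. Then the signed excedance enumerator over mod-k-alternating permutations satisfies ∑_{π ∈ MP_{n,1}^k} sgn(π) · t^{exc(π)} = (1 - t)^{n-k} as polynomials in ℚ[t]. -/
open Polynomial Finset

/-- Number of excedances of a permutation of `Fin n` (indices where `π i > i`). -/
def exc {n : ℕ} (π : Equiv.Perm (Fin n)) : ℕ :=
  (Finset.univ.filter fun i => π i > i).card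

/-- Mod-k-alternating permutations of size `n` starting with remainder `r` (mod k):
permutations with `π i - i ≡ r - 1 (mod k)` for all `i`. -/
def MP (n k r : ℕ) : Finset (Equiv.Perm (Fin n)) :=
  Finset.univ.filter fun π => ∀ i : Fin n, ((π i : ℤ) - (i : ℤ)) ≡ ((r : ℤ) - 1) [ZMOD (k : ℤ)]

/-! ### Part 1: the signed excedance polynomial of a full symmetric group -/

/-- Matrix whose determinant is the signed excedance polynomial. -/
noncomputable def excMat (N : ℕ) : Matrix (Fin N) (Fin N) ℚ[X] :=
  Matrix.of fun a b => if b < a then X else 1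

lemma excMat_apply (N : ℕ) (a b : Fin N) : excMat N a b = if b < a then X else 1 := rfl

lemma det_excMat : ∀ N : ℕ, (excMat N).det = (1 - X) ^ (N - 1) := by
  intro N
  induction N with
  | zero => simp [Matrix.det_fin_zero]
  | succ M ih =>
    match M, ih with
    | 0, _ => simp [Matrix.det_fin_one, excMat]
    | (N+1), ih =>
      have h01 : (0 : Fin (N+2)) ≠ 1 := by simp [Fin.ext_iff]
      have key := Matrix.det_updateRow_add_smul_self (excMat (N+2)) h01 (-1 : ℚ[X])
      have hB0 : ∀ j : Fin (N+2),
          ((excMat (N+2)).updateRow 0 (excMat (N+2) 0 + (-1 : ℚ[X]) • excMat (N+2) 1)) 0 j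
            = if j = 0 then 1 - X else 0 := by
        intro j
        rw [Matrix.updateRow_self]
        simp only [Pi.add_apply, Pi.smul_apply, smul_eq_mul, neg_one_mul, excMat_apply]
        have hn0 : ¬ (j < (0 : Fin (N+2))) := by simp [Fin.lt_def]
        by_cases hj : j = 0
        · subst hj
          rw [if_neg hn0, if_pos (by simp [Fin.lt_def]), if_pos rfl]
          ring
        · have hn1 : ¬ (j < (1 : Fin (N+2))) := by
            simp only [Fin.lt_def, Fin.val_one]
            have : (j : ℕ) ≠ 0 := fun h => hj (Fin.ext h)
            omega
          rw [if_neg hn0, if_neg hn1, if_neg hj]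
          ring
      have hsub : ((excMat (N+2)).updateRow 0
            (excMat (N+2) 0 + (-1 : ℚ[X]) • excMat (N+2) 1)).submatrix
              Fin.succ (Fin.succAbove 0) = excMat (N+1) := by
        ext a b
        rw [Matrix.submatrix_apply, Fin.succAbove_zero,
          Matrix.updateRow_ne (Fin.succ_ne_zero a), excMat_apply, excMat_apply]
        simp only [Fin.succ_lt_succ_iff]
      have hdetB : ((excMat (N+2)).updateRow 0
          (excMat (N+2) 0 + (-1 : ℚ[X]) • excMat (N+2) 1)).det
            = (1 - X) * (1 - X) ^ N := by
        rw [Matrix.det_succ_row_zero]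
        rw [Finset.sum_eq_single 0]
        · rw [hB0 0, if_pos rfl, hsub, ih]
          simp
        · intro j _ hj
          rw [hB0 j, if_neg hj]
          ring
        · intro h; exact absurd (Finset.mem_univ _) h
      calc (excMat (N+2)).det = (1 - X) * (1 - X) ^ N := by rw [← key, hdetB]
        _ = (1 - X) ^ (N + 2 - 1) := by rw [show N + 2 - 1 = N + 1 from rfl, pow_succ]; ring

lemma signedExc_sum (N : ℕ) :
    ∑ σ : Equiv.Perm (Fin N), ((Equiv.Perm.sign σ : ℤ) : ℚ[X]) * X ^ exc σ
      = (1 - X) ^ (N - 1) := by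
  rw [← det_excMat N, Matrix.det_apply]
  refine Finset.sum_congr rfl fun σ _ => ?_
  have hprod : ∏ i, excMat N (σ i) i = X ^ exc σ := by
    unfold exc
    rw [show (∏ i, excMat N (σ i) i) = ∏ i, (if (σ i > i) then X else 1) from rfl]
    rw [Finset.prod_ite, Finset.prod_const, Finset.prod_const, one_pow, mul_one]
  rw [hprod, Units.smul_def, zsmul_eq_mul]

/-! ### Part 2: sign of a fiberwise permutation -/

section SignSigma

variable {ι : Type*} [DecidableEq ι] [Fintype ι]
  {β : ι → Type*} [∀ i, DecidableEq (β i)] [∀ i, Fintype (β i)]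

/-- The embedding of a fiber into the sigma type, as an equivalence onto a subtype. -/
def fiberEquiv (i : ι) : β i ≃ {s : Σ j, β j // s.1 = i} where
  toFun b := ⟨⟨i, b⟩, rfl⟩
  invFun s := s.2 ▸ s.1.2
  left_inv b := rfl
  right_inv := by rintro ⟨⟨j, b⟩, rfl⟩; rfl

lemma sigmaCongrRight_mulSingle (i : ι) (x : Equiv.Perm (β i)) :
    Equiv.Perm.sigmaCongrRightHom β (Pi.mulSingle i x)
      = x.extendDomain (fiberEquiv i) := by
  apply Equiv.ext
  rintro ⟨j, b⟩
  by_cases hj : j = i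
  · subst hj
    have hL : (Equiv.Perm.sigmaCongrRightHom β (Pi.mulSingle j x)) ⟨j, b⟩
        = ⟨j, x b⟩ := by
      show (⟨j, Pi.mulSingle (M := fun i => Equiv.Perm (β i)) j x j b⟩ : Σ i, β i) = ⟨j, x b⟩
      rw [Pi.mulSingle_eq_same]
    have hR : (x.extendDomain (fiberEquiv j)) ⟨j, b⟩ = ⟨j, x b⟩ := by
      have h : (fun s : Σ j', β j' => s.1 = j) ⟨j, b⟩ := rfl
      rw [Equiv.Perm.extendDomain_apply_subtype x (fiberEquiv j) h]
      rfl
    rw [hL, hR]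
  · rw [Equiv.Perm.extendDomain_apply_not_subtype x (fiberEquiv i) (by simpa using hj)]
    show (⟨j, Pi.mulSingle (M := fun i => Equiv.Perm (β i)) i x j b⟩ : Σ i, β i) = ⟨j, b⟩
    rw [Pi.mulSingle_eq_of_ne hj]
    rfl

lemma sign_sigmaCongrRightHom (σ : ∀ i, Equiv.Perm (β i)) :
    Equiv.Perm.sign (Equiv.Perm.sigmaCongrRightHom β σ)
      = ∏ i, Equiv.Perm.sign (σ i) := by
  classical
  have main : ∀ s : Finset ι,
      Equiv.Perm.sign (Equiv.Perm.sigmaCongrRightHom β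
        (fun i => if i ∈ s then σ i else 1))
        = ∏ i ∈ s, Equiv.Perm.sign (σ i) := by
    intro s
    induction s using Finset.induction with
    | empty =>
      simp only [Finset.notMem_empty, if_false, Finset.prod_empty]
      rw [show (fun (i : ι) => (1 : Equiv.Perm (β i))) = (1 : ∀ i, Equiv.Perm (β i)) from rfl,
        map_one, map_one]
    | @insert a s ha ih =>
      have hdecomp : (fun i => if i ∈ insert a s then σ i else 1)
          = Pi.mulSingle a (σ a) * (fun i => if i ∈ s then σ i else 1) := by
        funext i
        by_cases hi : i = a
        · subst hi
          simp [Pi.mulSingle_eq_same, ha]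
        · simp [Pi.mulSingle_eq_of_ne hi, Finset.mem_insert, hi]
      rw [hdecomp, map_mul, map_mul, ih, sigmaCongrRight_mulSingle,
        Equiv.Perm.sign_extendDomain, Finset.prod_insert ha]
  have := main Finset.univ
  simpa using this

end SignSigma

/-! ### Part 3: the residue class decomposition of `Fin n` -/

section Decomp

variable (n k : ℕ)

/-- Number of elements of `Fin n` congruent to `c` mod `k`. -/
def cnt (c : ℕ) : ℕ := (n + k - 1 - c) / k

lemma lt_iff_lt_cnt (hk : 0 < k) {c : ℕ} (hc : c < k) (q : ℕ) :
    c + q * k < n ↔ q < cnt n k c := by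
  unfold cnt
  rw [show (q < (n + k - 1 - c) / k) ↔ ((q + 1) * k ≤ n + k - 1 - c) from by
      rw [Nat.lt_iff_add_one_le, Nat.le_div_iff_mul_le hk],
    show (q + 1) * k = q * k + k by ring]
  have := q.zero_le
  generalize q * k = t
  omega

/-- The order- and fiber-respecting equivalence between the sigma type of residue classes
and `Fin n`. -/
def classEquiv (hk : 0 < k) : (Σ c : Fin k, Fin (cnt n k c)) ≃ Fin n where
  toFun s := ⟨s.1 + s.2 * k, (lt_iff_lt_cnt n k hk s.1.2 _).2 s.2.2⟩
  invFun i := ⟨⟨i % k, Nat.mod_lt _ hk⟩, ⟨i / k,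
    (lt_iff_lt_cnt n k hk (Nat.mod_lt _ hk) _).1 (by rw [Nat.mod_add_div']; exact i.2)⟩⟩
  left_inv := by
    rintro ⟨⟨c, hc⟩, ⟨q, hq⟩⟩
    have h1 : (c + q * k) % k = c := by
      rw [Nat.add_mul_mod_self_right, Nat.mod_eq_of_lt hc]
    have h2 : (c + q * k) / k = q := by
      rw [Nat.add_mul_div_right _ _ hk, Nat.div_eq_of_lt hc, zero_add]
    exact Sigma.ext (Fin.ext h1) ((Fin.heq_ext_iff (congrArg (cnt n k) h1)).2 h2)
  right_inv := by
    intro i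
    exact Fin.ext (Nat.mod_add_div' _ _)

lemma classEquiv_apply (hk : 0 < k) (s : Σ c : Fin k, Fin (cnt n k c)) :
    ((classEquiv n k hk s : Fin n) : ℕ) = s.1 + s.2 * k := rfl

lemma classEquiv_mod (hk : 0 < k) (s : Σ c : Fin k, Fin (cnt n k c)) :
    ((classEquiv n k hk s : Fin n) : ℕ) % k = s.1 := by
  rw [classEquiv_apply, Nat.add_mul_mod_self_right, Nat.mod_eq_of_lt s.1.2]

lemma classEquiv_lt_iff (hk : 0 < k) (c : Fin k) (q q' : Fin (cnt n k c)) :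
    classEquiv n k hk ⟨c, q⟩ < classEquiv n k hk ⟨c, q'⟩ ↔ q < q' := by
  simp only [Fin.lt_def, classEquiv_apply]
  constructor
  · intro h; by_contra h'; push_neg at h'
    exact absurd (Nat.add_le_add_left (Nat.mul_le_mul_right k h') c) (by omega)
  · intro h
    exact Nat.add_lt_add_left ((Nat.mul_lt_mul_right hk).2 h) c

lemma sum_cnt (hk : 0 < k) : ∑ c : Fin k, cnt n k (c : ℕ) = n := by
  have := Fintype.card_congr (classEquiv n k hk)
  simpa [Fintype.card_sigma] using this

/-- The fiberwise permutation of `Fin n` associated to a family of permutations of the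
residue classes. -/
def classPerm (hk : 0 < k) (σ : ∀ c : Fin k, Equiv.Perm (Fin (cnt n k c))) :
    Equiv.Perm (Fin n) :=
  (classEquiv n k hk).permCongr (Equiv.Perm.sigmaCongrRightHom _ σ)

lemma classPerm_apply_e (hk : 0 < k) (σ : ∀ c : Fin k, Equiv.Perm (Fin (cnt n k c)))
    (s : Σ c : Fin k, Fin (cnt n k c)) :
    classPerm n k hk σ (classEquiv n k hk s) = classEquiv n k hk ⟨s.1, σ s.1 s.2⟩ := by
  unfold classPerm
  rw [Equiv.permCongr_apply, Equiv.symm_apply_apply]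
  rfl

lemma sign_classPerm (hk : 0 < k) (σ : ∀ c : Fin k, Equiv.Perm (Fin (cnt n k c))) :
    Equiv.Perm.sign (classPerm n k hk σ) = ∏ c, Equiv.Perm.sign (σ c) := by
  unfold classPerm
  rw [Equiv.Perm.sign_permCongr, sign_sigmaCongrRightHom]

lemma exc_classPerm (hk : 0 < k) (σ : ∀ c : Fin k, Equiv.Perm (Fin (cnt n k c))) :
    exc (classPerm n k hk σ) = ∑ c, exc (σ c) := by
  unfold exc
  rw [← Finset.card_sigma]
  symm
  apply Finset.card_bij' (fun s _ => classEquiv n k hk s)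
    (fun i _ => (classEquiv n k hk).symm i)
  · rintro ⟨c, q⟩ hs
    rw [Finset.mem_sigma] at hs
    have hq : σ c q > q := (Finset.mem_filter.1 hs.2).2
    rw [Finset.mem_filter]
    refine ⟨Finset.mem_univ _, ?_⟩
    rw [classPerm_apply_e]
    exact (classEquiv_lt_iff n k hk c _ _).2 hq
  · intro i hi
    rw [Finset.mem_filter] at hi
    have hgt := hi.2
    rw [Finset.mem_sigma]
    refine ⟨Finset.mem_univ _, ?_⟩
    rw [Finset.mem_filter]
    refine ⟨Finset.mem_univ _, ?_⟩
    have hi' : classPerm n k hk σ (classEquiv n k hk ((classEquiv n k hk).symm i))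
        > classEquiv n k hk ((classEquiv n k hk).symm i) := by
      rwa [Equiv.apply_symm_apply]
    rw [classPerm_apply_e] at hi'
    have := (classEquiv_lt_iff n k hk ((classEquiv n k hk).symm i).1 _ _).1 hi'
    exact this
  · intro s _; exact Equiv.symm_apply_apply _ _
  · intro i _; exact Equiv.apply_symm_apply _ _

end Decomp

/-! ### Part 4: membership in `MP n k 1` and the inverse map -/

lemma mem_MP_iff (n k : ℕ) (π : Equiv.Perm (Fin n)) :
    π ∈ MP n k 1 ↔ ∀ i : Fin n, (π i : ℕ) % k = (i : ℕ) % k := by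
  have key : ∀ a b : ℕ, (((a:ℤ) - (b:ℤ)) ≡ ((1:ℕ):ℤ) - 1 [ZMOD (k : ℤ)]) ↔ a % k = b % k := by
    intro a b
    rw [show ((1:ℕ):ℤ) - 1 = 0 by norm_num, Int.modEq_zero_iff_dvd, ← Int.modEq_iff_dvd]
    show (b:ℤ) % (k:ℤ) = (a:ℤ) % (k:ℤ) ↔ _
    rw [← Int.natCast_mod, ← Int.natCast_mod, Nat.cast_inj]
    exact eq_comm
  unfold MP
  rw [Finset.mem_filter]
  simp only [Finset.mem_univ, true_and]
  exact forall_congr' fun i => key _ _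

lemma classPerm_mem_MP (n k : ℕ) (hk : 0 < k)
    (σ : ∀ c : Fin k, Equiv.Perm (Fin (cnt n k c))) :
    classPerm n k hk σ ∈ MP n k 1 := by
  rw [mem_MP_iff]
  intro i
  have h1 : classPerm n k hk σ i
      = classEquiv n k hk ⟨((classEquiv n k hk).symm i).1,
          σ _ ((classEquiv n k hk).symm i).2⟩ := by
    conv_lhs => rw [← Equiv.apply_symm_apply (classEquiv n k hk) i]
    rw [classPerm_apply_e]
  have h2 : (i : ℕ) % k = ((classEquiv n k hk).symm i).1 := by
    conv_lhs => rw [← Equiv.apply_symm_apply (classEquiv n k hk) i]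
    exact classEquiv_mod n k hk _
  rw [h1, classEquiv_mod n k hk, h2]

section Inverse

variable (n k : ℕ) (hk : 0 < k)

/-- The inverse map: the family of class permutations induced by `π ∈ MP n k 1`. -/
noncomputable def classSplit (π : Equiv.Perm (Fin n))
    (hπ : ∀ i : Fin n, (π i : ℕ) % k = (i : ℕ) % k) (c : Fin k) :
    Equiv.Perm (Fin (cnt n k c)) := by
  refine Equiv.ofBijective (fun q => ⟨(π (classEquiv n k hk ⟨c, q⟩) : ℕ) / k, ?_⟩) ?_
  · rw [← lt_iff_lt_cnt n k hk c.2]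
    have hmod : (π (classEquiv n k hk ⟨c, q⟩) : ℕ) % k = c := by
      rw [hπ]; exact classEquiv_mod n k hk ⟨c, q⟩
    calc (c : ℕ) + (π (classEquiv n k hk ⟨c, q⟩) : ℕ) / k * k
        = (π (classEquiv n k hk ⟨c, q⟩) : ℕ) % k
          + (π (classEquiv n k hk ⟨c, q⟩) : ℕ) / k * k := by rw [hmod]
      _ = (π (classEquiv n k hk ⟨c, q⟩) : ℕ) := Nat.mod_add_div' _ _
      _ < n := (π (classEquiv n k hk ⟨c, q⟩)).2
  · rw [← Finite.injective_iff_bijective]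
    intro q q' h
    have hdiv := congrArg (fun x : Fin (cnt n k c) => (x : ℕ) * k) h
    simp only at hdiv
    have hmod : ∀ r : Fin (cnt n k c),
        (π (classEquiv n k hk ⟨c, r⟩) : ℕ) % k = c := by
      intro r; rw [hπ]; exact classEquiv_mod n k hk ⟨c, r⟩
    have hval : (π (classEquiv n k hk ⟨c, q⟩) : ℕ) = (π (classEquiv n k hk ⟨c, q'⟩) : ℕ) := by
      have e1 := Nat.mod_add_div' (π (classEquiv n k hk ⟨c, q⟩) : ℕ) k
      have e2 := Nat.mod_add_div' (π (classEquiv n k hk ⟨c, q'⟩) : ℕ) k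
      rw [hmod q] at e1; rw [hmod q'] at e2
      omega
    have heq : classEquiv n k hk ⟨c, q⟩ = classEquiv n k hk ⟨c, q'⟩ :=
      π.injective (Fin.ext hval)
    have := congrArg (fun x : Fin n => (x : ℕ)) heq
    simp only [classEquiv_apply] at this
    have hqq : (q : ℕ) = (q' : ℕ) := by
      have hk' := hk
      have : (q : ℕ) * k = (q' : ℕ) * k := by omega
      exact Nat.eq_of_mul_eq_mul_right hk' this
    exact Fin.ext hqq

lemma classPerm_classSplit (π : Equiv.Perm (Fin n))
    (hπ : ∀ i : Fin n, (π i : ℕ) % k = (i : ℕ) % k) :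
    classPerm n k hk (classSplit n k hk π hπ) = π := by
  apply Equiv.ext
  intro i
  have h1 : classPerm n k hk (classSplit n k hk π hπ) i
      = classEquiv n k hk ⟨((classEquiv n k hk).symm i).1,
          classSplit n k hk π hπ _ ((classEquiv n k hk).symm i).2⟩ := by
    conv_lhs => rw [← Equiv.apply_symm_apply (classEquiv n k hk) i]
    rw [classPerm_apply_e]
  rw [h1]
  apply Fin.ext
  rw [classEquiv_apply]
  show (((classEquiv n k hk).symm i).1 : ℕ)
      + (π (classEquiv n k hk ⟨((classEquiv n k hk).symm i).1,
          ((classEquiv n k hk).symm i).2⟩) : ℕ) / k * k = (π i : ℕ)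
  have hi : classEquiv n k hk ⟨((classEquiv n k hk).symm i).1,
      ((classEquiv n k hk).symm i).2⟩ = i := by
    rw [show (⟨((classEquiv n k hk).symm i).1, ((classEquiv n k hk).symm i).2⟩
        : Σ c : Fin k, Fin (cnt n k c)) = (classEquiv n k hk).symm i from rfl]
    exact Equiv.apply_symm_apply _ _
  rw [hi]
  have hc : (((classEquiv n k hk).symm i).1 : ℕ) = (π i : ℕ) % k := by
    rw [hπ i]
    conv_rhs => rw [← Equiv.apply_symm_apply (classEquiv n k hk) i]
    rw [classEquiv_mod]
  rw [hc]
  exact Nat.mod_add_div' _ _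

lemma classSplit_classPerm (σ : ∀ c : Fin k, Equiv.Perm (Fin (cnt n k c)))
    (hπ : ∀ i : Fin n, (classPerm n k hk σ i : ℕ) % k = (i : ℕ) % k) :
    classSplit n k hk (classPerm n k hk σ) hπ = σ := by
  funext c
  apply Equiv.ext
  intro q
  apply Fin.ext
  show (classPerm n k hk σ (classEquiv n k hk ⟨c, q⟩) : ℕ) / k = ((σ c q : ℕ))
  rw [classPerm_apply_e, classEquiv_apply]
  show ((c : ℕ) + (σ c q : ℕ) * k) / k = (σ c q : ℕ)
  rw [Nat.add_mul_div_right _ _ hk, Nat.div_eq_of_lt c.2, zero_add]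

end Inverse

/-! ### Main theorem -/

theorem stmt0 (n k m j : ℕ) (hn : 0 < n) (hk : 0 < k) (hnd : ¬ k ∣ n)
    (hj1 : 1 ≤ j) (hj2 : j ≤ k - 1) (hmj : n = m * k + j) :
    ∑ π ∈ MP n k 1, ((Equiv.Perm.sign π : ℤ) : ℚ[X]) * X ^ exc π = (1 - X) ^ (n - k) := by
  classical
  -- step 1: reindex the sum over MP by families of class permutations
  have step1 : ∑ π ∈ MP n k 1, ((Equiv.Perm.sign π : ℤ) : ℚ[X]) * X ^ exc π
      = ∑ σ ∈ (Finset.univ : Finset (∀ c : Fin k, Equiv.Perm (Fin (cnt n k c)))),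
          ((Equiv.Perm.sign (classPerm n k hk σ) : ℤ) : ℚ[X]) * X ^ exc (classPerm n k hk σ) := by
    symm
    refine Finset.sum_bij' (fun σ _ => classPerm n k hk σ)
      (fun π hπ => classSplit n k hk π ((mem_MP_iff n k π).1 hπ))
      ?_ ?_ ?_ ?_ ?_
    · intro σ _; exact classPerm_mem_MP n k hk σ
    · intro π hπ; exact Finset.mem_univ _
    · intro σ _
      exact classSplit_classPerm n k hk σ _
    · intro π hπ
      exact classPerm_classSplit n k hk π _
    · intro σ _; rfl
  rw [step1]
  -- step 2: the summand factors over the classes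
  have step2 : ∀ σ : ∀ c : Fin k, Equiv.Perm (Fin (cnt n k c)),
      ((Equiv.Perm.sign (classPerm n k hk σ) : ℤ) : ℚ[X]) * X ^ exc (classPerm n k hk σ)
        = ∏ c : Fin k, (((Equiv.Perm.sign (σ c) : ℤ) : ℚ[X]) * X ^ exc (σ c)) := by
    intro σ
    rw [sign_classPerm n k hk σ, exc_classPerm n k hk σ, Finset.prod_mul_distrib,
      ← Finset.prod_pow_eq_pow_sum]
    congr 1
    rw [Units.coe_prod, Int.cast_prod]
  simp only [step2]
  -- step 3: exchange sum and product
  have step3 : ∑ σ ∈ (Finset.univ : Finset (∀ c : Fin k, Equiv.Perm (Fin (cnt n k c)))),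
      ∏ c : Fin k, (((Equiv.Perm.sign (σ c) : ℤ) : ℚ[X]) * X ^ exc (σ c))
        = ∏ c : Fin k, ∑ τ : Equiv.Perm (Fin (cnt n k c)),
            (((Equiv.Perm.sign τ : ℤ) : ℚ[X]) * X ^ exc τ) := by
    rw [Finset.prod_univ_sum]
    rw [Fintype.piFinset_univ]
  rw [step3]
  -- step 4: evaluate each factor
  have step4 : ∀ c : Fin k, (∑ τ : Equiv.Perm (Fin (cnt n k c)),
      (((Equiv.Perm.sign τ : ℤ) : ℚ[X]) * X ^ exc τ)) = (1 - X) ^ (cnt n k c - 1) :=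
    fun c => signedExc_sum (cnt n k c)
  simp only [step4]
  -- step 5: collect powers
  rw [Finset.prod_pow_eq_pow_sum]
  congr 1
  -- ∑ c, (cnt n k c - 1) = n - k
  by_cases hkn : k ≤ n
  · have h1 : ∀ c : Fin k, 1 ≤ cnt n k (c : ℕ) := by
      intro c
      have hc := c.2
      show 1 ≤ (n + k - 1 - (c : ℕ)) / k
      rw [Nat.one_le_div_iff hk]
      omega
    rw [Finset.sum_tsub_distrib _ (fun c _ => h1 c), sum_cnt n k hk]
    simp [Finset.card_univ]
  · push_neg at hkn
    have h0 : ∀ c : Fin k, cnt n k (c : ℕ) - 1 = 0 := by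
      intro c
      have hc := c.2
      have : cnt n k (c : ℕ) < 2 := by
        unfold cnt
        rw [Nat.div_lt_iff_lt_mul hk]
        omega
      omega
    rw [Finset.sum_congr rfl (fun c _ => h0 c)]
    simp
    omega
end

section
/- Let k and m be positive integers and let n = mk. Then ∑_{π ∈ MP_{n,1}^k} sgn(π) · t^{exc(π)} = (1 - t)^{n-k} as polynomials in ℚ[t]. -/
open Polynomial Finset

lemma detM : ∀ (m : ℕ), (Matrix.of fun i j : Fin m => if (j:ℕ) < (i:ℕ) then (X:ℚ[X]) else 1).det = (1 - X)^(m-1)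
  | 0 => by simp [Matrix.det_fin_zero]
  | 1 => by simp [Matrix.det_fin_one]
  | (m+2) => by
    set M := (Matrix.of fun i j : Fin (m+2) => if (j:ℕ) < (i:ℕ) then (X:ℚ[X]) else 1) with hM
    have h01 : (0 : Fin (m+2)) ≠ 1 := by simp [Fin.ext_iff]
    have key : M.det = Matrix.det (Matrix.updateRow M 0 (M 0 + (-1 : ℚ[X]) • M 1)) :=
      (Matrix.det_updateRow_add_smul_self M h01 _).symm
    rw [key, Matrix.det_succ_row_zero]
    have hrow : ∀ j : Fin (m+2), (Matrix.updateRow M 0 (M 0 + (-1 : ℚ[X]) • M 1)) 0 j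
        = if j = 0 then 1 - X else 0 := by
      intro j
      rw [Matrix.updateRow_self]
      simp only [Pi.add_apply, Pi.smul_apply, hM, Matrix.of_apply, smul_eq_mul]
      rcases eq_or_ne j 0 with rfl | hj
      · norm_num; ring
      · have : 0 < (j:ℕ) := Nat.pos_of_ne_zero (Fin.val_ne_zero_iff.mpr hj)
        simp [hj, Nat.not_lt.2 this, this]
    have hsum : ∑ j : Fin (m+2), (-1 : ℚ[X]) ^ (j : ℕ) *
          (Matrix.updateRow M 0 (M 0 + (-1 : ℚ[X]) • M 1)) 0 j *
          ((Matrix.updateRow M 0 (M 0 + (-1 : ℚ[X]) • M 1)).submatrix Fin.succ j.succAbove).det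
        = (1 - X) * ((Matrix.updateRow M 0 (M 0 + (-1 : ℚ[X]) • M 1)).submatrix Fin.succ (Fin.succAbove 0)).det := by
      rw [Finset.sum_eq_single 0]
      · rw [hrow]; simp
      · intro j _ hj; rw [hrow]; simp [hj]
      · simp
    rw [hsum]
    have hsub : ((Matrix.updateRow M 0 (M 0 + (-1 : ℚ[X]) • M 1)).submatrix Fin.succ (Fin.succAbove 0))
        = (Matrix.of fun i j : Fin (m+1) => if (j:ℕ) < (i:ℕ) then (X:ℚ[X]) else 1) := by
      ext i j
      rw [Matrix.submatrix_apply, Matrix.updateRow_ne (Fin.succ_ne_zero i)]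
      simp only [hM, Matrix.of_apply, Fin.succAbove_zero, Fin.val_succ, Nat.add_lt_add_iff_right]
    rw [hsub, detM (m+1)]
    have h2 : m + 1 - 1 = m := by omega
    have h3 : m + 2 - 1 = m + 1 := by omega
    rw [h2, h3]
    ring


set_option maxHeartbeats 2000000 in
theorem stmt1 (k m : ℕ) (hk : 0 < k) (hm : 0 < m) (n : ℕ) (hn : n = m * k) :
    ∑ π ∈ MP n k 1, ((Equiv.Perm.sign π : ℤ) : ℚ[X]) * X ^ exc π = (1 - X) ^ (n - k) := by
  classical
  set B : Matrix (Fin n) (Fin n) ℚ[X] :=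
    Matrix.of (fun i j : Fin n => if ((i:ℤ) - (j:ℤ)) ≡ 0 [ZMOD (k:ℤ)]
      then (if (j:ℕ) < (i:ℕ) then (X:ℚ[X]) else 1) else 0) with hB
  have step1 : ∑ π ∈ MP n k 1, ((Equiv.Perm.sign π : ℤ) : ℚ[X]) * X ^ exc π = B.det := by
    rw [Matrix.det_apply']
    rw [← Finset.sum_subset (Finset.subset_univ (MP n k 1))]
    · apply Finset.sum_congr rfl
      intro π hπ
      have hπ' : ∀ i : Fin n, ((π i : ℤ) - (i : ℤ)) ≡ 0 [ZMOD (k:ℤ)] := by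
        have := (Finset.mem_filter.1 hπ).2
        simpa using this
      congr 1
      have : ∀ i : Fin n, B (π i) i = if (i:ℕ) < ((π i):ℕ) then (X:ℚ[X]) else 1 := by
        intro i; simp [hB, hπ' i]
      rw [Finset.prod_congr rfl (fun i _ => this i)]
      rw [Finset.prod_ite, Finset.prod_const, Finset.prod_const_one, mul_one]
      have hcard : (Finset.univ.filter fun i : Fin n => (i:ℕ) < ((π i):ℕ)).card = exc π := by
        rfl
      rw [hcard]
    · intro π _ hπ
      have : ∃ i : Fin n, ¬ ((π i : ℤ) - (i : ℤ)) ≡ 0 [ZMOD (k:ℤ)] := by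
        by_contra h
        push_neg at h
        exact hπ (Finset.mem_filter.2 ⟨Finset.mem_univ _, by simpa using h⟩)
      obtain ⟨i, hi⟩ := this
      have : B (π i) i = 0 := by simp [hB, hi]
      have h0 : ∏ j : Fin n, B (π j) j = 0 := Finset.prod_eq_zero (Finset.mem_univ i) this
      rw [h0, mul_zero]
  rw [step1]
  set e : Fin m × Fin k ≃ Fin n := finProdFinEquiv.trans (finCongr hn.symm) with he
  set D : Fin k → Matrix (Fin m) (Fin m) ℚ[X] :=
    fun _ => Matrix.of (fun i j : Fin m => if (j:ℕ) < (i:ℕ) then (X:ℚ[X]) else 1) with hD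
  have hval : ∀ (i : Fin m) (c : Fin k), ((e (i, c) : Fin n) : ℕ) = (c : ℕ) + k * (i : ℕ) := by
    intro i c
    simp [he]
  have hkz : (0:ℤ) < (k:ℤ) := by exact_mod_cast hk
  have hsub : B.submatrix e e = Matrix.blockDiagonal D := by
    ext ⟨i, c⟩ ⟨j, c'⟩
    rw [Matrix.submatrix_apply, Matrix.blockDiagonal_apply]
    have hv1 : ((e (i, c) : Fin n) : ℕ) = (c : ℕ) + k * (i : ℕ) := hval i c
    have hv2 : ((e (j, c') : Fin n) : ℕ) = (c' : ℕ) + k * (j : ℕ) := hval j c'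
    have hz1 : ((e (i, c) : Fin n) : ℤ) = (c : ℤ) + (k:ℤ) * (i : ℤ) := by exact_mod_cast congrArg (Nat.cast (R := ℤ)) hv1
    have hz2 : ((e (j, c') : Fin n) : ℤ) = (c' : ℤ) + (k:ℤ) * (j : ℤ) := by exact_mod_cast congrArg (Nat.cast (R := ℤ)) hv2
    have hcond : ((((e (i, c)) : Fin n) : ℤ) - (((e (j, c')) : Fin n) : ℤ)) ≡ 0 [ZMOD (k:ℤ)] ↔ c = c' := by
      rw [hz1, hz2, Int.modEq_zero_iff_dvd]
      constructor
      · rintro ⟨d, hd⟩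
        have hdd : (c:ℤ) - (c':ℤ) = (k:ℤ) * (d - i + j) := by ring_nf; ring_nf at hd; linarith
        have hck : (c:ℤ) < k := by exact_mod_cast c.isLt
        have hck' : (c':ℤ) < k := by exact_mod_cast c'.isLt
        have hc0 : (0:ℤ) ≤ (c:ℤ) := Int.natCast_nonneg _
        have hc0' : (0:ℤ) ≤ (c':ℤ) := Int.natCast_nonneg _
        have hcc : (c:ℤ) = c' := by
          rcases lt_trichotomy ((d:ℤ) - i + j) 0 with h|h|h
          · have h1 : (d:ℤ) - i + j ≤ -1 := by omega
            nlinarith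
          · rw [h, mul_zero] at hdd; linarith
          · have h1 : (1:ℤ) ≤ (d:ℤ) - i + j := by omega
            nlinarith
        exact Fin.ext (by exact_mod_cast hcc)
      · rintro rfl
        exact ⟨(i:ℤ) - (j:ℤ), by ring⟩
    simp only [hB, Matrix.of_apply]
    rw [if_congr hcond rfl rfl]
    rcases eq_or_ne c c' with rfl | hcc
    · rw [if_pos rfl, if_pos rfl]
      have hlt : (((e (j, c)) : Fin n) : ℕ) < (((e (i, c)) : Fin n) : ℕ) ↔ (j:ℕ) < (i:ℕ) := by
        rw [hv1, hval j c, Nat.add_lt_add_iff_left]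
        exact Nat.mul_lt_mul_left hk
      rw [if_congr hlt rfl rfl]
      simp [hD]
    · rw [if_neg hcc, if_neg hcc]
  calc B.det = (B.submatrix e e).det := (Matrix.det_submatrix_equiv_self e B).symm
    _ = (Matrix.blockDiagonal D).det := by rw [hsub]
    _ = ∏ c : Fin k, (D c).det := Matrix.det_blockDiagonal D
    _ = (1 - X) ^ (n - k) := by
        rw [Finset.prod_congr rfl (fun c _ => detM m), Finset.prod_const, Finset.card_univ,
          Fintype.card_fin, ← pow_mul]
        congr 1
        rw [hn, Nat.sub_mul, one_mul]
end

section
/- Let k and m be positive integers, let n = mk, and let r be an integer with 2 ≤ r ≤ k. Then ∑_{π ∈ MP_{n,r}^k} sgn(π) · t^{exc(π)} = (-1)^{(mr-1)(k-r+1)} · t^{k-r+1} · (1 - t)^{n-k} as polynomials in ℚ[t]. -/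
open Polynomial Finset

theorem lemA (m : ℕ) :
    ∑ σ : Equiv.Perm (Fin (m+1)), ((Equiv.Perm.sign σ : ℤ) : ℚ[X]) * X ^ exc σ
      = (1 - X) ^ m := by
  classical
  set L : Matrix (Fin (m+1)) (Fin (m+1)) ℚ[X] :=
    fun a b => if b = 0 then (if a = 0 then 1 else X) else (if a = b then 1 else 0) with hL
  set U : Matrix (Fin (m+1)) (Fin (m+1)) ℚ[X] :=
    fun a b => if a = 0 then 1 else (if a ≤ b then 1 - X else 0) with hU
  set M : Matrix (Fin (m+1)) (Fin (m+1)) ℚ[X] :=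
    fun a b => if b < a then X else 1 with hM
  have hprod : ∀ σ : Equiv.Perm (Fin (m+1)), (∏ i, M (σ i) i) = X ^ exc σ := by
    intro σ
    rw [exc, Finset.prod_ite (fun _ => X) (fun _ => (1:ℚ[X]))]
    simp [Finset.prod_const]
  have h1 : ∑ σ : Equiv.Perm (Fin (m+1)), ((Equiv.Perm.sign σ : ℤ) : ℚ[X]) * X ^ exc σ = M.det := by
    rw [Matrix.det_apply']
    exact Finset.sum_congr rfl fun σ _ => by rw [hprod σ]
  have hLU : L * U = M := by
    ext a b
    rw [Matrix.mul_apply]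
    rcases eq_or_ne a 0 with ha | ha
    · subst ha
      have key : ∀ c : Fin (m+1), L 0 c * U c b = if c = 0 then U c b else 0 := by
        intro c
        rcases eq_or_ne c 0 with hc | hc
        · simp [hL, hc]
        · simp [hL, hc, Ne.symm hc]
      rw [Finset.sum_congr rfl fun c _ => key c, Finset.sum_ite_eq' Finset.univ 0 (fun c => U c b)]
      simp [hU, hM, Fin.not_lt_zero]
    · have key : ∀ c : Fin (m+1), L a c * U c b
          = (if c = 0 then X * U c b else 0) + (if c = a then U c b else 0) := by
        intro c
        rcases eq_or_ne c 0 with hc | hc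
        · subst hc; simp [hL, ha, Ne.symm ha]
        · rcases eq_or_ne c a with hca | hca
          · subst hca; simp [hL, hc]
          · simp [hL, hc, hca, Ne.symm hca]
      rw [Finset.sum_congr rfl fun c _ => key c, Finset.sum_add_distrib,
        Finset.sum_ite_eq' Finset.univ 0 (fun c => X * U c b),
        Finset.sum_ite_eq' Finset.univ a (fun c => U c b)]
      simp only [Finset.mem_univ, if_true]
      have hU0 : U 0 b = 1 := by simp [hU]
      rw [hU0, mul_one]
      simp only [hU, hM]
      rcases le_or_gt a b with h | h
      · rw [if_neg (not_lt.2 h), if_neg ha, if_pos h]; ring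
      · rw [if_pos h, if_neg ha, if_neg (not_le.2 h)]; ring
  have hdetL : L.det = 1 := by
    rw [Matrix.det_of_lowerTriangular L (by
      intro i j hij
      have h2 : i < j := hij
      have hj0 : j ≠ 0 := fun h => by subst h; exact absurd h2 (Fin.not_lt_zero i)
      simp [hL, hj0, h2.ne])]
    refine Finset.prod_eq_one fun a _ => ?_
    rcases eq_or_ne a 0 with h | h <;> simp [hL, h]
  have hdetU : U.det = (1 - X) ^ m := by
    rw [Matrix.det_of_upperTriangular (by
      intro i j hij
      have h2 : j < i := hij
      have : i ≠ 0 := fun h => by subst h; exact absurd h2 (Fin.not_lt_zero j)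
      simp [hU, this, not_le.2 h2])]
    rw [Fin.prod_univ_succ]
    simp [hU, Fin.succ_ne_zero, Finset.prod_const]
  rw [h1, ← hLU, Matrix.det_mul, hdetL, hdetU, one_mul]

theorem lemA' (m : ℕ) :
    ∑ σ : Equiv.Perm (Fin (m+1)), ((Equiv.Perm.sign σ : ℤ) : ℚ[X])
        * X ^ (Finset.univ.filter fun i => σ i ≤ i).card
      = X * (X - 1) ^ m := by
  classical
  set Q : Matrix (Fin (m+1)) (Fin (m+1)) ℚ[X] :=
    fun a b => if b = Fin.last m then 1 else (if a ≤ b then X - 1 else 0) with hQ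
  set L : Matrix (Fin (m+1)) (Fin (m+1)) ℚ[X] :=
    fun a b => if a = Fin.last m then (if b = Fin.last m then X else 1)
      else (if a = b then 1 else 0) with hL
  set M : Matrix (Fin (m+1)) (Fin (m+1)) ℚ[X] :=
    fun a b => if a ≤ b then X else 1 with hM
  have hprod : ∀ σ : Equiv.Perm (Fin (m+1)),
      (∏ i, M (σ i) i) = X ^ (Finset.univ.filter fun i => σ i ≤ i).card := by
    intro σ
    rw [Finset.prod_ite (fun _ => X) (fun _ => (1:ℚ[X]))]
    simp [Finset.prod_const]
  have h1 : ∑ σ : Equiv.Perm (Fin (m+1)), ((Equiv.Perm.sign σ : ℤ) : ℚ[X])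
      * X ^ (Finset.univ.filter fun i => σ i ≤ i).card = M.det := by
    rw [Matrix.det_apply']
    exact Finset.sum_congr rfl fun σ _ => by rw [hprod σ]
  have hQL : Q * L = M := by
    ext a b
    rw [Matrix.mul_apply]
    rcases eq_or_ne b (Fin.last m) with hb | hb
    · subst hb
      have key : ∀ c : Fin (m+1), Q a c * L c (Fin.last m)
          = if c = Fin.last m then X else 0 := by
        intro c
        rcases eq_or_ne c (Fin.last m) with hc | hc
        · subst hc; simp [hQ, hL]
        · simp [hL, hc]
      rw [Finset.sum_congr rfl fun c _ => key c,
        Finset.sum_ite_eq' Finset.univ (Fin.last m) (fun _ => X)]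
      simp [hM, Fin.le_last]
    · have key : ∀ c : Fin (m+1), Q a c * L c b
          = (if c = Fin.last m then 1 else 0) + (if c = b then Q a b else 0) := by
        intro c
        rcases eq_or_ne c (Fin.last m) with hc | hc
        · subst hc; simp [hQ, hL, Ne.symm hb, hb]
        · rcases eq_or_ne c b with hcb | hcb
          · subst hcb; simp [hL, hc]
          · simp [hL, hc, hcb]
      rw [Finset.sum_congr rfl fun c _ => key c, Finset.sum_add_distrib,
        Finset.sum_ite_eq' Finset.univ (Fin.last m) (fun _ => (1:ℚ[X])),
        Finset.sum_ite_eq' Finset.univ b (fun _ => Q a b)]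
      simp only [Finset.mem_univ, if_true]
      simp only [hQ, hM, if_neg hb]
      rcases le_or_gt a b with h | h
      · rw [if_pos h, if_pos h]; ring
      · rw [if_neg (not_le.2 h), if_neg (not_le.2 h)]; ring
  have hdetQ : Q.det = (X - 1) ^ m := by
    rw [Matrix.det_of_upperTriangular (by
      intro i j hij
      have h2 : j < i := hij
      have : j ≠ Fin.last m := fun h => by
        subst h; exact absurd h2 (not_lt.2 (Fin.le_last i))
      simp [hQ, this, not_le.2 h2])]
    rw [Fin.prod_univ_castSucc]
    simp [hQ, (Fin.castSucc_lt_last _).ne, Finset.prod_const]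
  have hdetL : L.det = X := by
    rw [Matrix.det_of_lowerTriangular L (by
      intro i j hij
      have h2 : i < j := hij
      have : i ≠ Fin.last m := fun h => by
        subst h; exact absurd h2 (not_lt.2 (Fin.le_last j))
      simp [hL, this, h2.ne])]
    rw [Fin.prod_univ_castSucc]
    simp [hL, (Fin.castSucc_lt_last _).ne]
  rw [h1, ← hQL, Matrix.det_mul, hdetQ, hdetL]
  ring

theorem lemA'' (m : ℕ) :
    ∑ σ : Equiv.Perm (Fin (m+1)), ((Equiv.Perm.sign σ : ℤ) : ℚ[X])
        * X ^ (Finset.univ.filter fun j => j ≤ σ j).card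
      = X * (X - 1) ^ m := by
  classical
  rw [← lemA' m]
  refine Fintype.sum_bijective (fun σ => σ⁻¹) (Equiv.inv _).bijective _ _ fun σ => ?_
  congr 2
  · rw [Equiv.Perm.sign_inv]
  · refine Finset.card_bij' (fun j _ => σ j) (fun i _ => σ⁻¹ i) ?_ ?_ ?_ ?_
    · intro j hj
      simp only [Finset.mem_filter, Finset.mem_univ, true_and] at hj ⊢
      simpa using hj
    · intro i hi
      simp only [Finset.mem_filter, Finset.mem_univ, true_and] at hi ⊢
      simpa using hi
    · intro j _; simp
    · intro i _; simp

open Fin.NatCast in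
theorem finRotate_pow_apply (k t : ℕ) (x : Fin (k+1)) :
    ((finRotate (k+1)) ^ t) x = x + (t : Fin (k+1)) := by
  induction t with
  | zero => simp
  | succ t ih =>
    rw [pow_succ', Equiv.Perm.mul_apply, finRotate_succ_apply, Nat.cast_add, Nat.cast_one]
    rw [ih]
    exact add_assoc _ _ _

open Fin.NatCast in
theorem sign_addRight (k : ℕ) (s : Fin (k+1)) :
    Equiv.Perm.sign (Equiv.addRight s) = ((-1 : ℤˣ) ^ k) ^ (s : ℕ) := by
  have h : Equiv.addRight s = (finRotate (k+1)) ^ (s : ℕ) := by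
    ext x
    rw [finRotate_pow_apply]
    simp [Equiv.addRight, Fin.cast_val_eq_self]
  rw [h, map_pow, sign_finRotate, Nat.add_sub_cancel]

theorem base_lt {k c c' j j' : ℕ} (hc : c < k) (h : j < j') :
    c + k * j < c' + k * j' :=
  calc c + k * j < k + k * j := Nat.add_lt_add_right hc _
    _ = k * (j + 1) := by ring
    _ ≤ k * j' := Nat.mul_le_mul_left k h
    _ ≤ c' + k * j' := Nat.le_add_left _ _

theorem base_cmp {k c c' j j' : ℕ} (hc : c < k) (hc' : c' < k) :
    c + k * j < c' + k * j' ↔ j < j' ∨ (j = j' ∧ c < c') := by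
  rcases lt_trichotomy j j' with h | h | h
  · simp only [h, true_or, iff_true]
    exact base_lt hc h
  · subst h
    simp [Nat.add_lt_add_iff_right]
  · have := base_lt (c' := c) hc' h
    constructor
    · intro h2; exact absurd h2 (Nat.lt_asymm this)
    · rintro (h2 | ⟨h2, _⟩) <;> omega

theorem card_filter_lt (k t : ℕ) (h : t ≤ k) :
    (Finset.univ.filter fun c : Fin k => (c : ℕ) < t).card = t := by
  refine Finset.card_eq_of_bijective (fun i hi => ⟨i, lt_of_lt_of_le hi h⟩) ?_ ?_ ?_
  · intro a ha
    simp only [Finset.mem_filter, Finset.mem_univ, true_and] at ha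
    exact ⟨a, ha, Fin.ext rfl⟩
  · intro i hi
    simp [hi]
  · intro i j hi hj hij
    exact Fin.mk.inj_iff.1 hij

theorem neg_one_pow_congr' {a b : ℕ} (h : Even (a + b)) : ((-1 : ℚ[X]) ^ a) = (-1) ^ b := by
  have h2 : (-1 : ℚ[X]) ^ a * (-1) ^ b = 1 := by rw [← pow_add]; exact h.neg_one_pow
  have h3 : (-1 : ℚ[X]) ^ b * (-1) ^ b = 1 := by
    rw [← pow_add]; exact Even.neg_one_pow ⟨b, rfl⟩
  calc (-1 : ℚ[X]) ^ a = (-1) ^ a * ((-1) ^ b * (-1) ^ b) := by rw [h3, mul_one]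
    _ = ((-1) ^ a * (-1) ^ b) * (-1) ^ b := by ring
    _ = (-1) ^ b := by rw [h2, one_mul]

theorem stmt2 (k m r : ℕ) (hk : 0 < k) (hm : 0 < m) (n : ℕ) (hn : n = m * k)
    (hr1 : 2 ≤ r) (hr2 : r ≤ k) :
    ∑ π ∈ MP n k r, ((Equiv.Perm.sign π : ℤ) : ℚ[X]) * X ^ exc π
      = (-1) ^ ((m * r - 1) * (k - r + 1)) * X ^ (k - r + 1) * (1 - X) ^ (n - k) := by
  classical
  have hk2 : 2 ≤ k := hr1.trans hr2
  obtain ⟨k', rfl⟩ : ∃ k', k = k' + 1 := ⟨k - 1, by omega⟩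
  obtain ⟨m', rfl⟩ : ∃ m', m = m' + 1 := ⟨m - 1, by omega⟩
  set K := k' + 1 with hK
  set Mm := m' + 1 with hMm
  set s : ℕ := r - 1 with hsdef
  have hs1 : 1 ≤ s := by omega
  have hsk : s < K := by omega
  set s' : Fin K := ⟨s, hsk⟩ with hs'
  set ρ : Equiv.Perm (Fin K) := Equiv.addRight s' with hρ
  have hρval : ∀ c : Fin K, ((ρ c : ℕ)) = ((c : ℕ) + s) % K := by
    intro c
    simp [hρ, Equiv.addRight, Fin.add_def, hs']
  set e : Fin Mm × Fin K ≃ Fin n := (finProdFinEquiv).trans (finCongr hn.symm) with he_def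
  have he : ∀ p : Fin Mm × Fin K, ((e p : ℕ)) = (p.2 : ℕ) + K * (p.1 : ℕ) := fun p => rfl
  set Pi : (Fin K → Equiv.Perm (Fin Mm)) → Equiv.Perm (Fin n) :=
    fun σ => e.permCongr ((Equiv.prodCongrLeft σ).trans (Equiv.prodCongrRight fun _ => ρ)) with hPi
  have hPapp : ∀ σ (j : Fin Mm) (c : Fin K), Pi σ (e (j, c)) = e (σ c j, ρ c) := by
    intro σ j c
    simp [hPi, Equiv.permCongr_apply, Equiv.prodCongrLeft, Equiv.prodCongrRight]
  have hz : ∀ t : ℤ, (K : ℤ) * t ≡ 0 [ZMOD (K : ℤ)] := fun t => Int.modEq_zero_iff_dvd.2 ⟨t, rfl⟩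
  have hrs : (r : ℤ) - 1 = (s : ℤ) := by omega
  have hmem : ∀ σ, Pi σ ∈ MP n K r := by
    intro σ
    rw [MP, Finset.mem_filter]
    refine ⟨Finset.mem_univ _, fun i => ?_⟩
    obtain ⟨⟨j, c⟩, rfl⟩ : ∃ p, e p = i := ⟨e.symm i, e.apply_symm_apply i⟩
    rw [hPapp]
    have v1 : ((e (σ c j, ρ c) : Fin n) : ℤ) = ((ρ c : ℕ) : ℤ) + K * (σ c j : ℕ) := by
      rw [he]; push_cast; ring
    have v2 : ((e (j, c) : Fin n) : ℤ) = ((c : ℕ) : ℤ) + K * (j : ℕ) := by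
      rw [he]; push_cast; ring
    rw [v1, v2, hrs, hρval]
    have base : ((((c : ℕ) + s) % K : ℕ) : ℤ) ≡ ((c : ℕ) : ℤ) + s [ZMOD (K : ℤ)] := by
      push_cast
      exact Int.emod_emod_of_dvd _ dvd_rfl
    have h1 := (base.add_right ((K : ℤ) * (σ c j : ℕ))).sub_right (((c : ℕ) : ℤ) + K * (j : ℕ))
    refine h1.trans ?_
    have e3 : ((c : ℕ) : ℤ) + s + (K : ℤ) * (σ c j : ℕ) - (((c : ℕ) : ℤ) + K * (j : ℕ))
        = (s : ℤ) + (K : ℤ) * ((σ c j : ℕ) - (j : ℕ)) := by push_cast; ring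
    rw [e3]
    exact ((hz _).add_left _).trans (by rw [add_zero])
  have hinj : ∀ σ σ' : Fin K → Equiv.Perm (Fin Mm), Pi σ = Pi σ' → σ = σ' := by
    intro σ σ' h
    funext c
    ext j
    have h2 : Pi σ (e (j, c)) = Pi σ' (e (j, c)) := by rw [h]
    rw [hPapp, hPapp] at h2
    have h3 := (Prod.ext_iff.1 (e.injective h2)).1
    exact congrArg Fin.val h3
  have hsurj : ∀ π ∈ MP n K r, ∃ σ, Pi σ = π := by
    intro π hπ
    rw [MP, Finset.mem_filter] at hπ
    have hmod := hπ.2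
    set g : Equiv.Perm (Fin Mm × Fin K) := e.permCongr.symm π with hg
    have hgapp : ∀ p : Fin Mm × Fin K, π (e p) = e (g p) := by
      intro p
      simp [hg, Equiv.permCongr_apply]
    have hg2 : ∀ (j : Fin Mm) (c : Fin K), (g (j, c)).2 = ρ c := by
      intro j c
      have h0 := hmod (e (j, c))
      rw [hgapp (j, c)] at h0
      set p := g (j, c) with hp
      have v1 : ((e p : Fin n) : ℤ) = ((p.2 : ℕ) : ℤ) + K * (p.1 : ℕ) := by
        rw [he]; push_cast; ring
      have v2 : ((e (j, c) : Fin n) : ℤ) = ((c : ℕ) : ℤ) + K * (j : ℕ) := by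
        rw [he]; push_cast; ring
      rw [v1, v2, hrs] at h0
      have key : ((p.2 : ℕ) : ℤ) ≡ ((c : ℕ) : ℤ) + s [ZMOD (K : ℤ)] := by
        have h1 := h0.add_right (((c : ℕ) : ℤ) + (K : ℤ) * (j : ℕ) - (K : ℤ) * (p.1 : ℕ))
        have e2 : ((p.2 : ℕ) : ℤ) + (K : ℤ) * (p.1 : ℕ) - (((c : ℕ) : ℤ) + K * (j : ℕ))
            + (((c : ℕ) : ℤ) + (K : ℤ) * (j : ℕ) - (K : ℤ) * (p.1 : ℕ)) = ((p.2 : ℕ) : ℤ) := by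
          ring
        have e3 : (s : ℤ) + (((c : ℕ) : ℤ) + (K : ℤ) * (j : ℕ) - (K : ℤ) * (p.1 : ℕ))
            = (((c : ℕ) : ℤ) + s) + (K : ℤ) * ((j : ℕ) - (p.1 : ℕ)) := by ring
        rw [e2, e3] at h1
        exact h1.trans (((hz _).add_left _).trans (by rw [add_zero]))
      have hKpos : (0 : ℤ) < (K : ℤ) := by positivity
      have hmods : ((p.2 : ℕ) : ℤ) % K = (((c : ℕ) : ℤ) + s) % K := key
      have hl : ((p.2 : ℕ) : ℤ) % K = ((p.2 : ℕ) : ℤ) :=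
        Int.emod_eq_of_lt (by positivity) (by exact_mod_cast p.2.isLt)
      have hr' : (((c : ℕ) : ℤ) + s) % K = ((((c : ℕ) + s) % K : ℕ) : ℤ) := by
        push_cast; ring_nf
      have : ((p.2 : ℕ) : ℤ) = ((((c : ℕ) + s) % K : ℕ) : ℤ) := by
        rw [← hl, hmods, hr']
      have hv : (p.2 : ℕ) = ((c : ℕ) + s) % K := by exact_mod_cast this
      exact Fin.ext (by rw [hv, hρval])
    have hinj2 : ∀ c : Fin K, Function.Injective (fun j : Fin Mm => (g (j, c)).1) := by
      intro c j j' hjj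
      have hpq : g (j, c) = g (j', c) :=
        Prod.ext hjj (by rw [hg2, hg2])
      exact (Prod.ext_iff.1 (g.injective hpq)).1
    refine ⟨fun c => Equiv.ofBijective _ (Finite.injective_iff_bijective.1 (hinj2 c)), ?_⟩
    ext i
    obtain ⟨⟨j, c⟩, rfl⟩ : ∃ p, e p = i := ⟨e.symm i, e.apply_symm_apply i⟩
    rw [hPapp, hgapp (j, c)]
    refine congrArg Fin.val (congrArg e (Prod.ext_iff.2 ⟨?_, ?_⟩))
    · rfl
    · exact (hg2 j c).symm
  have hsign : ∀ σ : Fin K → Equiv.Perm (Fin Mm),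
      Equiv.Perm.sign (Pi σ) = ((-1 : ℤˣ) ^ (k' * (s * Mm))) * ∏ c, Equiv.Perm.sign (σ c) := by
    intro σ
    rw [hPi]
    simp only
    rw [Equiv.Perm.sign_permCongr]
    have hmul : (Equiv.prodCongrLeft σ).trans (Equiv.prodCongrRight fun _ : Fin Mm => ρ)
        = (Equiv.prodCongrRight fun _ : Fin Mm => ρ) * (Equiv.prodCongrLeft σ) := rfl
    rw [hmul, map_mul, Equiv.Perm.sign_prodCongrRight, Equiv.Perm.sign_prodCongrLeft]
    rw [Finset.prod_const, Finset.card_univ, Fintype.card_fin]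
    rw [hρ, sign_addRight]
    have : ((s' : Fin K) : ℕ) = s := rfl
    rw [this, ← pow_mul, ← pow_mul]
  have hwlt : ∀ c : Fin K, (((c : ℕ) < (ρ c : ℕ)) ↔ (c : ℕ) + s < K) := by
    intro c
    rw [hρval]
    constructor
    · intro h
      by_contra hh
      push_neg at hh
      have h2 : ((c : ℕ) + s) % K = (c : ℕ) + s - K := by
        rw [Nat.mod_eq_sub_mod hh, Nat.mod_eq_of_lt (by omega)]
      omega
    · intro h; rw [Nat.mod_eq_of_lt h]; omega
  have hexc : ∀ σ : Fin K → Equiv.Perm (Fin Mm),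
      exc (Pi σ) = ∑ c : Fin K,
        (if (c : ℕ) + s < K then (Finset.univ.filter fun j => j ≤ σ c j).card
          else exc (σ c)) := by
    intro σ
    rw [exc, Finset.card_filter]
    rw [← Equiv.sum_comp e (fun i => if Pi σ i > i then (1:ℕ) else 0)]
    rw [Fintype.sum_prod_type]
    rw [Finset.sum_comm]
    refine Finset.sum_congr rfl fun c _ => ?_
    have hcond : ∀ j : Fin Mm, (Pi σ (e (j, c)) > e (j, c)) ↔
        ((j : ℕ) < (σ c j : ℕ) ∨ ((j : ℕ) = (σ c j : ℕ) ∧ (c : ℕ) < (ρ c : ℕ))) := by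
      intro j
      rw [hPapp]
      rw [gt_iff_lt, Fin.lt_def, he, he]
      exact base_cmp c.isLt (ρ c).isLt
    by_cases hc : (c : ℕ) + s < K
    · rw [if_pos hc, Finset.card_filter]
      refine Finset.sum_congr rfl fun j _ => ?_
      refine if_congr ?_ rfl rfl
      rw [hcond j]
      have := (hwlt c).2 hc
      constructor
      · rintro (h | ⟨h, _⟩)
        · exact Fin.le_def.2 (le_of_lt h)
        · exact Fin.le_def.2 (le_of_eq h)
      · intro h
        rcases eq_or_lt_of_le (Fin.le_def.1 h) with h2 | h2
        · exact Or.inr ⟨h2, this⟩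
        · exact Or.inl h2
    · rw [if_neg hc, exc, Finset.card_filter]
      refine Finset.sum_congr rfl fun j _ => ?_
      refine if_congr ?_ rfl rfl
      rw [hcond j]
      have hnot : ¬ ((c : ℕ) < (ρ c : ℕ)) := fun h => hc ((hwlt c).1 h)
      rw [gt_iff_lt, Fin.lt_def]
      constructor
      · rintro (h | ⟨_, h⟩)
        · exact h
        · exact absurd h hnot
      · exact Or.inl
  have hre : ∑ π ∈ MP n K r, ((Equiv.Perm.sign π : ℤ) : ℚ[X]) * X ^ exc π
      = ∑ σ : Fin K → Equiv.Perm (Fin Mm),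
          ((Equiv.Perm.sign (Pi σ) : ℤ) : ℚ[X]) * X ^ exc (Pi σ) := by
    refine (Finset.sum_bij (fun σ _ => Pi σ) (fun σ _ => hmem σ) ?_ ?_ ?_).symm
    · intro a _ b _ h; exact hinj a b h
    · intro π hπ; obtain ⟨σ, hσ⟩ := hsurj π hπ; exact ⟨σ, Finset.mem_univ σ, hσ⟩
    · intro σ _; rfl
  rw [hre]
  have hsummand : ∀ σ : Fin K → Equiv.Perm (Fin Mm),
      ((Equiv.Perm.sign (Pi σ) : ℤ) : ℚ[X]) * X ^ exc (Pi σ)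
      = (-1 : ℚ[X]) ^ (k' * (s * Mm)) *
        ∏ c : Fin K, (((Equiv.Perm.sign (σ c) : ℤ) : ℚ[X]) *
          X ^ (if (c : ℕ) + s < K then (Finset.univ.filter fun j => j ≤ σ c j).card
            else exc (σ c))) := by
    intro σ
    rw [hsign σ, hexc σ, Finset.prod_mul_distrib, Finset.prod_pow_eq_pow_sum]
    push_cast
    ring
  rw [Finset.sum_congr rfl fun σ _ => hsummand σ, ← Finset.mul_sum]
  rw [← Fintype.piFinset_univ, Finset.sum_prod_piFinset (univ : Finset (Equiv.Perm (Fin Mm)))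
    (fun (c : Fin K) (σc : Equiv.Perm (Fin Mm)) => ((Equiv.Perm.sign σc : ℤ) : ℚ[X]) *
      X ^ (if (c : ℕ) + s < K then (Finset.univ.filter fun j => j ≤ σc j).card else exc σc))]
  have hfac : ∀ c : Fin K,
      (∑ σ : Equiv.Perm (Fin Mm), (((Equiv.Perm.sign σ : ℤ) : ℚ[X]) *
        X ^ (if (c : ℕ) + s < K then (Finset.univ.filter fun j => j ≤ σ j).card else exc σ)))
      = if (c : ℕ) + s < K then X * (X - 1) ^ m' else (1 - X) ^ m' := by
    intro c
    by_cases hc : (c : ℕ) + s < K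
    · simp only [if_pos hc]; exact lemA'' m'
    · simp only [if_neg hc]; exact lemA m'
  rw [Finset.prod_congr rfl fun c _ => hfac c]
  rw [Finset.prod_ite (fun _ => X * (X - 1) ^ m') (fun _ => (1 - X) ^ m'),
    Finset.prod_const, Finset.prod_const]
  set u : ℕ := K - s with hu
  have hcard1 : (Finset.univ.filter fun c : Fin K => (c : ℕ) + s < K).card = u := by
    have hfe : (Finset.univ.filter fun c : Fin K => (c : ℕ) + s < K)
        = (Finset.univ.filter fun c : Fin K => (c : ℕ) < u) := by
      ext c
      simp only [Finset.mem_filter, Finset.mem_univ, true_and]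
      omega
    rw [hfe]
    exact card_filter_lt K u (by omega)
  have hcard2 : (Finset.univ.filter fun c : Fin K => ¬((c : ℕ) + s < K)).card = s := by
    have h1 := Finset.card_filter_add_card_filter_not
      (s := (Finset.univ : Finset (Fin K))) (p := fun c : Fin K => (c : ℕ) + s < K)
    rw [hcard1, Finset.card_univ, Fintype.card_fin] at h1
    omega
  rw [hcard1, hcard2]
  -- algebra
  have h1 : ((X : ℚ[X]) - 1) ^ m' = (-1) ^ m' * (1 - X) ^ m' := by
    rw [show (X : ℚ[X]) - 1 = -(1 - X) from by ring, neg_pow]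
  have hmK : m' * u + m' * s = m' * K := by
    rw [← Nat.mul_add]
    congr 1
    omega
  have hpow : ((X : ℚ[X]) * (X - 1) ^ m') ^ u * ((1 - X) ^ m') ^ s
      = (-1 : ℚ[X]) ^ (m' * u) * (X ^ u * (1 - X) ^ (m' * K)) := by
    calc ((X : ℚ[X]) * (X - 1) ^ m') ^ u * ((1 - X) ^ m') ^ s
        = ((-1 : ℚ[X]) ^ m') ^ u * (X ^ u * (((1 - X) ^ m') ^ u * ((1 - X) ^ m') ^ s)) := by
          rw [h1]; ring
      _ = (-1 : ℚ[X]) ^ (m' * u) * (X ^ u * ((1 - X) ^ (m' * u) * (1 - X) ^ (m' * s))) := by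
          rw [← pow_mul, ← pow_mul, ← pow_mul]
      _ = (-1 : ℚ[X]) ^ (m' * u) * (X ^ u * (1 - X) ^ (m' * u + m' * s)) := by
          rw [pow_add]
      _ = (-1 : ℚ[X]) ^ (m' * u) * (X ^ u * (1 - X) ^ (m' * K)) := by rw [hmK]
  rw [hpow]
  have hnk : n - K = m' * K := by
    rw [hn, hMm, Nat.succ_mul]
    exact Nat.add_sub_cancel _ _
  have hkr : K - r + 1 = u := by omega
  rw [hnk, hkr]
  have hparity : (-1 : ℚ[X]) ^ (k' * (s * Mm)) * ((-1 : ℚ[X]) ^ (m' * u))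
      = (-1 : ℚ[X]) ^ ((Mm * r - 1) * u) := by
    rw [← pow_add]
    refine neg_one_pow_congr' ?_
    obtain ⟨v, hv⟩ : ∃ v, s = v + 1 := ⟨s - 1, by omega⟩
    have hb : Mm * r - 1 = (m' + 1) * (v + 1) + m' := by
      have e1 : Mm * r = ((m' + 1) * (v + 1) + m') + 1 := by
        rw [hMm, show r = v + 2 by omega]; ring
      rw [e1]; exact Nat.add_sub_cancel _ _
    have hk' : k' = v + u := by omega
    rw [hb, hk', hv, hMm]
    have : (v + u) * ((v + 1) * (m' + 1)) + m' * u + ((m' + 1) * (v + 1) + m') * u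
        = v * (v + 1) * (m' + 1) + 2 * ((v + 1) * (m' + 1) * u + m' * u) := by ring
    rw [this]
    exact ((Nat.even_mul_succ_self v).mul_right _).add (even_two_mul _)
  calc (-1 : ℚ[X]) ^ (k' * (s * Mm)) * (((-1) ^ (m' * u)) * (X ^ u * (1 - X) ^ (m' * K)))
      = ((-1 : ℚ[X]) ^ (k' * (s * Mm)) * ((-1) ^ (m' * u))) * X ^ u * (1 - X) ^ (m' * K) := by
        ring
    _ = (-1 : ℚ[X]) ^ ((Mm * r - 1) * u) * X ^ u * (1 - X) ^ (m' * K) := by rw [hparity]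
end

section
/- Let n and k be positive integers with k not dividing n, and write n = mk + j with 1 ≤ j ≤ k - 1. Then the excedance enumerator over mod-k-alternating permutations satisfies ∑_{π ∈ MP_{n,1}^k} t^{exc(π)} = A_{m+1}(t)^j · A_m(t)^{k-j} as polynomials in ℚ[t]. -/
open Polynomial Finset Equiv

/-- Number of descents of a permutation of `Fin n`: indices `i` with `i + 1 < n` and
`π (i+1) < π i`. -/
def des {n : ℕ} (π : Equiv.Perm (Fin n)) : ℕ :=
  (Finset.univ.filter fun i : Fin n =>
    (i : ℕ) + 1 < n ∧ π ⟨((i : ℕ) + 1) % n, Nat.mod_lt _ i.pos⟩ < π i).card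

/-- The Eulerian polynomial `A_m(t) = ∑_{π ∈ S_m} t^(des π)`. -/
noncomputable def Eulerian (m : ℕ) : ℚ[X] :=
  ∑ π : Equiv.Perm (Fin m), X ^ des π

namespace S9
def eperm {m : ℕ} (τ : Perm (Fin m)) : Perm (Fin (m+1)) :=
  finSuccEquivLast.symm.permCongr τ.optionCongr
@[simp] lemma eperm_castSucc {m : ℕ} (τ : Perm (Fin m)) (i : Fin m) :
    eperm τ i.castSucc = (τ i).castSucc := by
  simp [eperm, Equiv.permCongr_apply]
@[simp] lemma eperm_last {m : ℕ} (τ : Perm (Fin m)) :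
    eperm τ (Fin.last m) = Fin.last m := by
  simp [eperm, Equiv.permCongr_apply]
lemma eperm_injective {m : ℕ} : Function.Injective (eperm (m := m)) :=
  fun _ _ h => Equiv.optionCongr_injective ((finSuccEquivLast.symm.permCongr).injective h)
lemma exc_eq_sum {N : ℕ} (σ : Perm (Fin N)) :
    exc σ = ∑ i : Fin N, if σ i > i then 1 else 0 := Finset.card_filter _ _
lemma exc_eperm {m : ℕ} (τ : Perm (Fin m)) : exc (eperm τ) = exc τ := by
  rw [exc_eq_sum, exc_eq_sum, Fin.sum_univ_castSucc]
  simp [Fin.castSucc_lt_castSucc_iff]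

def excIns {m : ℕ} (τ : Perm (Fin m)) (p : Fin (m+1)) : Perm (Fin (m+1)) :=
  eperm τ * Equiv.swap p (Fin.last m)

lemma ins_injective {m : ℕ} (f : Fin (m+1) → Perm (Fin (m+1))) (hf : ∀ p, f p p = Fin.last m) :
    Function.Injective (fun x : Perm (Fin m) × Fin (m+1) => eperm x.1 * f x.2) := by
  rintro ⟨τ, p⟩ ⟨τ', p'⟩ h
  simp only at h
  have hp : ∀ (τ : Perm (Fin m)) (p : Fin (m+1)), (eperm τ * f p) p = Fin.last m := by
    intro τ p
    simp [Perm.mul_apply, hf]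
  have hpp : p = p' := by
    have h1 := hp τ p
    rw [h] at h1
    exact (eperm τ' * f p').injective (h1.trans (hp τ' p').symm)
  subst hpp
  have : eperm τ = eperm τ' := mul_right_cancel h
  exact Prod.ext (eperm_injective this) rfl

lemma ins_bijective {m : ℕ} (f : Fin (m+1) → Perm (Fin (m+1))) (hf : ∀ p, f p p = Fin.last m) :
    Function.Bijective (fun x : Perm (Fin m) × Fin (m+1) => eperm x.1 * f x.2) := by
  rw [Fintype.bijective_iff_injective_and_card]
  refine ⟨ins_injective f hf, ?_⟩
  simp [Fintype.card_perm, Nat.factorial_succ, mul_comm]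

lemma exc_excIns_castSucc {m : ℕ} (τ : Perm (Fin m)) (u : Fin m) :
    exc (excIns τ u.castSucc) = if τ u > u then exc τ else exc τ + 1 := by
  have hσ : ∀ x : Fin m, excIns τ u.castSucc x.castSucc
      = if x = u then Fin.last m else (τ x).castSucc := by
    intro x
    by_cases h : x = u
    · subst h; simp [excIns, Perm.mul_apply]
    · rw [excIns, Perm.mul_apply, Equiv.swap_apply_of_ne_of_ne
        (by simpa using fun hh => h (Fin.castSucc_injective _ hh)) (Fin.castSucc_lt_last x).ne,
        eperm_castSucc, if_neg h]
  have hlast : excIns τ u.castSucc (Fin.last m) = (τ u).castSucc := by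
    simp [excIns, Perm.mul_apply, Equiv.swap_apply_right]
  rw [exc_eq_sum, Fin.sum_univ_castSucc, hlast]
  have h2 : ∀ x : Fin m, (if excIns τ u.castSucc x.castSucc > x.castSucc then 1 else 0)
      = if x = u then 1 else (if τ x > x then 1 else 0) := by
    intro x
    rw [hσ x]
    by_cases h : x = u
    · simp [h, Fin.castSucc_lt_last]
    · simp [h, Fin.castSucc_lt_castSucc_iff]
  rw [Finset.sum_congr rfl fun x _ => h2 x]
  have hnot : ¬ ((τ u).castSucc > Fin.last m) := by
    exact not_lt.2 (Fin.le_last _)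
  rw [if_neg hnot, add_zero]
  rw [← Finset.add_sum_erase _ _ (Finset.mem_univ u), if_pos rfl]
  have hrest : ∑ x ∈ Finset.univ.erase u, (if x = u then 1 else (if τ x > x then 1 else 0))
      = ∑ x ∈ Finset.univ.erase u, (if τ x > x then 1 else 0) := by
    refine Finset.sum_congr rfl fun x hx => ?_
    rw [if_neg (Finset.mem_erase.1 hx).1]
  rw [hrest]
  have hexc : exc τ = (if τ u > u then 1 else 0) + ∑ x ∈ Finset.univ.erase u, (if τ x > x then 1 else 0) := by
    rw [exc_eq_sum, ← Finset.add_sum_erase _ _ (Finset.mem_univ u)]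
  by_cases h : τ u > u
  · rw [if_pos h, hexc, if_pos h]
  · rw [if_neg h, hexc, if_neg h, zero_add, add_comm]

lemma excIns_last {m : ℕ} (τ : Perm (Fin m)) : excIns τ (Fin.last m) = eperm τ := by
  simp [excIns]
  rfl

lemma sum_excIns {m : ℕ} (τ : Perm (Fin m)) :
    ∑ p : Fin (m+1), (X : ℚ[X]) ^ exc (excIns τ p)
      = (exc τ + 1) • X ^ exc τ + (m - exc τ) • X ^ (exc τ + 1) := by
  rw [Fin.sum_univ_castSucc, excIns_last, exc_eperm]
  have h1 : ∀ u : Fin m, (X : ℚ[X]) ^ exc (excIns τ u.castSucc)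
      = if τ u > u then X ^ exc τ else X ^ (exc τ + 1) := by
    intro u
    rw [exc_excIns_castSucc, apply_ite (fun e => (X : ℚ[X]) ^ e)]
  rw [Finset.sum_congr rfl fun u _ => h1 u, Finset.sum_ite, Finset.sum_const, Finset.sum_const]
  have hc1 : (Finset.univ.filter fun u => τ u > u).card = exc τ := rfl
  have hc2 : (Finset.univ.filter fun u => ¬ τ u > u).card = m - exc τ := by
    have := Finset.card_filter_add_card_filter_not (s := (Finset.univ : Finset (Fin m)))
      (p := fun u => τ u > u)
    simp only [Finset.card_univ, Fintype.card_fin] at this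
    omega
  rw [hc1, hc2, succ_nsmul]
  ring

def nextF {m : ℕ} (x : Fin m) : Fin m := ⟨((x : ℕ) + 1) % m, Nat.mod_lt _ x.pos⟩

def Dset {m : ℕ} (τ : Perm (Fin m)) : Finset (Fin m) :=
  Finset.univ.filter fun i : Fin m => (i : ℕ) + 1 < m ∧ τ (nextF i) < τ i

lemma des_eq_card {m : ℕ} (τ : Perm (Fin m)) : des τ = (Dset τ).card := rfl

lemma des_eq_sum {N : ℕ} (σ : Perm (Fin N)) :
    des σ = ∑ i : Fin N, if ((i : ℕ) + 1 < N ∧ σ ⟨((i : ℕ) + 1) % N, Nat.mod_lt _ i.pos⟩ < σ i)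
      then 1 else 0 := Finset.card_filter _ _

def posPerm {m : ℕ} (q : Fin (m+1)) : Perm (Fin (m+1)) :=
  (finSuccEquiv' q).trans finSuccEquivLast.symm

@[simp] lemma posPerm_self {m : ℕ} (q : Fin (m+1)) : posPerm q q = Fin.last m := by
  simp [posPerm]

@[simp] lemma posPerm_succAbove {m : ℕ} (q : Fin (m+1)) (x : Fin m) :
    posPerm q (q.succAbove x) = x.castSucc := by
  simp [posPerm, finSuccEquiv'_succAbove]

def desIns {m : ℕ} (τ : Perm (Fin m)) (q : Fin (m+1)) : Perm (Fin (m+1)) :=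
  eperm τ * posPerm q

@[simp] lemma desIns_self {m : ℕ} (τ : Perm (Fin m)) (q : Fin (m+1)) :
    desIns τ q q = Fin.last m := by
  simp [desIns, Perm.mul_apply]

@[simp] lemma desIns_succAbove {m : ℕ} (τ : Perm (Fin m)) (q : Fin (m+1)) (x : Fin m) :
    desIns τ q (q.succAbove x) = (τ x).castSucc := by
  simp [desIns, Perm.mul_apply]

lemma des_desIns_aux {m : ℕ} (τ : Perm (Fin m)) (q : Fin (m+1)) (x : Fin m) :
    (((q.succAbove x : Fin (m+1)) : ℕ) + 1 < m + 1 ∧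
      desIns τ q ⟨(((q.succAbove x : Fin (m+1)) : ℕ) + 1) % (m+1),
        Nat.mod_lt _ (q.succAbove x).pos⟩ < desIns τ q (q.succAbove x))
    ↔ (((x : ℕ) + 1 < m ∧ τ (nextF x) < τ x) ∧ (q : ℕ) ≠ (x : ℕ) + 1) := by
  have hqm : (q : ℕ) ≤ m := Nat.lt_succ_iff.1 q.isLt
  rcases lt_or_ge (Fin.castSucc x) q with hlt | hge
  · -- i = castSucc x
    have hxq : (x : ℕ) < (q : ℕ) := hlt
    rw [Fin.succAbove_of_castSucc_lt _ _ hlt]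
    have hcs : desIns τ q x.castSucc = (τ x).castSucc := by
      rw [← Fin.succAbove_of_castSucc_lt _ _ hlt]; exact desIns_succAbove τ q x
    rw [hcs]
    have hx1 : (x : ℕ) + 1 < m + 1 := Nat.succ_lt_succ x.isLt
    have hmod : (((Fin.castSucc x : Fin (m+1)) : ℕ) + 1) % (m+1) = (x : ℕ) + 1 := by
      simp [Nat.mod_eq_of_lt hx1]
    rcases eq_or_ne ((q : ℕ)) ((x : ℕ) + 1) with hq | hq
    · -- i+1 = q : both sides false
      have hi1 : (⟨(((Fin.castSucc x : Fin (m+1)) : ℕ) + 1) % (m+1),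
          Nat.mod_lt _ (Fin.castSucc x).pos⟩ : Fin (m+1)) = q := by
        apply Fin.ext; simp [hmod, hq]
      rw [hi1]
      simp only [desIns_self, hq]
      constructor
      · rintro ⟨-, hh⟩
        exact absurd hh (not_lt.2 (Fin.le_last _))
      · rintro ⟨-, hh⟩
        exact absurd rfl hh
    · -- x+1 < q
      have hx1q : (x : ℕ) + 1 < (q : ℕ) := lt_of_le_of_ne (Nat.succ_le_of_lt hxq) (Ne.symm hq)
      have hx1m : (x : ℕ) + 1 < m := lt_of_lt_of_le hx1q hqm
      have hnv : ((nextF x : Fin m) : ℕ) = (x : ℕ) + 1 := by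
        simp [nextF, Nat.mod_eq_of_lt hx1m]
      have hi1 : (⟨(((Fin.castSucc x : Fin (m+1)) : ℕ) + 1) % (m+1),
          Nat.mod_lt _ (Fin.castSucc x).pos⟩ : Fin (m+1)) = q.succAbove (nextF x) := by
        rw [Fin.succAbove_of_castSucc_lt _ _ (by rw [Fin.lt_def]; simpa [hnv] using hx1q)]
        apply Fin.ext; simp [hmod, hnv]
      rw [hi1, desIns_succAbove]
      simp only [Fin.castSucc_lt_castSucc_iff, Fin.coe_castSucc]
      constructor
      · rintro ⟨-, hh⟩
        exact ⟨⟨hx1m, hh⟩, hq⟩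
      · rintro ⟨⟨-, hh⟩, -⟩
        exact ⟨Nat.succ_lt_succ (lt_of_lt_of_le hxq hqm), hh⟩
  · -- i = succ x
    have hqx : (q : ℕ) ≤ (x : ℕ) := by
      have := hge; rw [Fin.le_def] at this; simpa using this
    have hne : (q : ℕ) ≠ (x : ℕ) + 1 := by omega
    rw [Fin.succAbove_of_le_castSucc _ _ hge]
    have hcs : desIns τ q x.succ = (τ x).castSucc := by
      rw [← Fin.succAbove_of_le_castSucc _ _ hge]; exact desIns_succAbove τ q x
    rw [hcs]
    rcases lt_or_ge ((x : ℕ) + 1) m with hx1m | hx1m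
    · have hnv : ((nextF x : Fin m) : ℕ) = (x : ℕ) + 1 := by
        simp [nextF, Nat.mod_eq_of_lt hx1m]
      have hmod : (((Fin.succ x : Fin (m+1)) : ℕ) + 1) % (m+1) = (x : ℕ) + 2 := by
        simp [Fin.val_succ, Nat.mod_eq_of_lt (by omega : (x : ℕ) + 2 < m + 1)]
      have hi1 : (⟨(((Fin.succ x : Fin (m+1)) : ℕ) + 1) % (m+1),
          Nat.mod_lt _ (Fin.succ x).pos⟩ : Fin (m+1)) = q.succAbove (nextF x) := by
        rw [Fin.succAbove_of_le_castSucc _ _ (by rw [Fin.le_def, Fin.coe_castSucc, hnv]; omega)]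
        apply Fin.ext; simp only [hmod, Fin.val_succ, hnv]; exact Nat.mod_eq_of_lt (by omega)
      rw [hi1, desIns_succAbove]
      simp only [Fin.castSucc_lt_castSucc_iff, Fin.val_succ]
      constructor
      · rintro ⟨-, hh⟩
        exact ⟨⟨hx1m, hh⟩, hne⟩
      · rintro ⟨⟨-, hh⟩, -⟩
        exact ⟨by omega, hh⟩
    · constructor
      · rintro ⟨hh, -⟩
        rw [Fin.val_succ] at hh
        omega
      · rintro ⟨⟨hh, -⟩, -⟩
        omega

lemma des_desIns {m : ℕ} (τ : Perm (Fin m)) (q : Fin (m+1)) :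
    des (desIns τ q) = (if q = Fin.last m then 0 else 1)
      + ∑ x : Fin m, if (((x : ℕ) + 1 < m ∧ τ (nextF x) < τ x) ∧ (q : ℕ) ≠ (x : ℕ) + 1)
          then 1 else 0 := by
  rw [des_eq_sum, Fin.sum_univ_succAbove _ q]
  congr 1
  · by_cases hq : q = Fin.last m
    · subst hq
      rw [if_pos rfl, if_neg (by rintro ⟨h1, -⟩; simp [Fin.val_last] at h1)]
    · have hql : (q : ℕ) < m := Fin.val_lt_last hq
      rw [if_neg hq]
      have h1 : (q : ℕ) + 1 < m + 1 := by omega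
      have hi1 : (⟨((q : ℕ) + 1) % (m+1), Nat.mod_lt _ q.pos⟩ : Fin (m+1)) ≠ q := by
        intro h
        have := congrArg Fin.val h
        simp [Nat.mod_eq_of_lt h1] at this
      have hlt : desIns τ q ⟨((q : ℕ) + 1) % (m+1), Nat.mod_lt _ q.pos⟩ < desIns τ q q := by
        rw [desIns_self]
        refine lt_of_le_of_ne (Fin.le_last _) fun h => hi1 ?_
        have := (desIns τ q).injective (h.trans (desIns_self τ q).symm)
        exact this
      rw [if_pos ⟨h1, hlt⟩]
  · refine Finset.sum_congr rfl fun x _ => ?_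
    exact if_congr (des_desIns_aux τ q x) rfl rfl

def Bset {m : ℕ} (τ : Perm (Fin m)) : Finset (Fin m) := (Dset τ).image nextF

lemma mem_Dset {m : ℕ} (τ : Perm (Fin m)) (x : Fin m) :
    x ∈ Dset τ ↔ ((x : ℕ) + 1 < m ∧ τ (nextF x) < τ x) := by
  simp [Dset]

lemma nextF_val {m : ℕ} (x : Fin m) (h : (x : ℕ) + 1 < m) : ((nextF x : Fin m) : ℕ) = (x : ℕ) + 1 := by
  simp [nextF, Nat.mod_eq_of_lt h]

lemma card_Bset {m : ℕ} (τ : Perm (Fin m)) : (Bset τ).card = des τ := by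
  rw [Bset, Finset.card_image_of_injOn, ← des_eq_card]
  intro a ha b hb hab
  have ha' := (mem_Dset τ a).1 (Finset.mem_coe.1 ha)
  have hb' := (mem_Dset τ b).1 (Finset.mem_coe.1 hb)
  have := congrArg Fin.val hab
  rw [nextF_val a ha'.1, nextF_val b hb'.1] at this
  exact Fin.ext (by omega)

lemma des_desIns_last {m : ℕ} (τ : Perm (Fin m)) : des (desIns τ (Fin.last m)) = des τ := by
  rw [des_desIns, if_pos rfl, zero_add]
  have h : ∀ x : Fin m, ((((x : ℕ) + 1 < m ∧ τ (nextF x) < τ x) ∧ ((Fin.last m : Fin (m+1)) : ℕ) ≠ (x : ℕ) + 1))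
      ↔ ((x : ℕ) + 1 < m ∧ τ (nextF x) < τ x) := by
    intro x
    constructor
    · exact fun hh => hh.1
    · intro hh
      refine ⟨hh, ?_⟩
      rw [Fin.val_last]
      omega
  rw [Finset.sum_congr rfl fun x _ => if_congr (h x) rfl rfl]
  rw [des_eq_card, Dset, Finset.card_filter]

lemma des_desIns_castSucc {m : ℕ} (τ : Perm (Fin m)) (u : Fin m) :
    des (desIns τ u.castSucc) = if u ∈ Bset τ then des τ else des τ + 1 := by
  rw [des_desIns, if_neg (Fin.castSucc_lt_last u).ne]
  by_cases hu : u ∈ Bset τ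
  · rw [if_pos hu]
    obtain ⟨x₀, hx₀D, hx₀⟩ := Finset.mem_image.1 hu
    have hx₀c := (mem_Dset τ x₀).1 hx₀D
    have huv : (u : ℕ) = (x₀ : ℕ) + 1 := by
      rw [← hx₀, nextF_val x₀ hx₀c.1]
    have hcongr : ∀ x : Fin m,
        ((((x : ℕ) + 1 < m ∧ τ (nextF x) < τ x) ∧ ((u.castSucc : Fin (m+1)) : ℕ) ≠ (x : ℕ) + 1))
        ↔ (x ∈ Dset τ ∧ x ≠ x₀) := by
      intro x
      rw [mem_Dset, Fin.coe_castSucc, huv]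
      constructor
      · rintro ⟨hc, hne⟩
        exact ⟨hc, fun h => hne (by rw [h])⟩
      · rintro ⟨hc, hne⟩
        exact ⟨hc, fun h => hne (Fin.ext (by omega))⟩
    rw [Finset.sum_congr rfl fun x _ => if_congr (hcongr x) rfl rfl]
    have : ∑ x : Fin m, (if x ∈ Dset τ ∧ x ≠ x₀ then 1 else 0) = ((Dset τ).erase x₀).card := by
      rw [← Finset.card_filter]
      congr 1
      ext y
      simp [Finset.mem_erase, and_comm]
    rw [this, Finset.card_erase_of_mem hx₀D, ← des_eq_card]
    have hpos : 0 < des τ := by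
      rw [des_eq_card]
      exact Finset.card_pos.2 ⟨x₀, hx₀D⟩
    omega
  · rw [if_neg hu]
    have hcongr : ∀ x : Fin m,
        ((((x : ℕ) + 1 < m ∧ τ (nextF x) < τ x) ∧ ((u.castSucc : Fin (m+1)) : ℕ) ≠ (x : ℕ) + 1))
        ↔ (x ∈ Dset τ) := by
      intro x
      rw [mem_Dset, Fin.coe_castSucc]
      constructor
      · exact fun hh => hh.1
      · intro hh
        refine ⟨hh, fun h => hu ?_⟩
        exact Finset.mem_image.2 ⟨x, (mem_Dset τ x).2 hh, Fin.ext (by rw [nextF_val x hh.1]; omega)⟩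
    rw [Finset.sum_congr rfl fun x _ => if_congr (hcongr x) rfl rfl]
    have hsum : (∑ x : Fin m, if x ∈ Dset τ then (1:ℕ) else 0) = des τ := by
      rw [des_eq_card, ← Finset.card_filter]
      congr 1
      ext y
      simp
    rw [hsum, add_comm]

lemma sum_desIns {m : ℕ} (τ : Perm (Fin m)) :
    ∑ q : Fin (m+1), (X : ℚ[X]) ^ des (desIns τ q)
      = (des τ + 1) • X ^ des τ + (m - des τ) • X ^ (des τ + 1) := by
  rw [Fin.sum_univ_castSucc, des_desIns_last]
  have h1 : ∀ u : Fin m, (X : ℚ[X]) ^ des (desIns τ u.castSucc)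
      = if u ∈ Bset τ then X ^ des τ else X ^ (des τ + 1) := by
    intro u
    rw [des_desIns_castSucc, apply_ite (fun e => (X : ℚ[X]) ^ e)]
  rw [Finset.sum_congr rfl fun u _ => h1 u, Finset.sum_ite, Finset.sum_const, Finset.sum_const]
  have hBc : (Finset.univ.filter (fun u => u ∈ Bset τ)).card = des τ := by
    rw [← card_Bset (τ := τ)]
    congr 1
    ext y
    simp
  have hBc2 : (Finset.univ.filter (fun u => ¬ u ∈ Bset τ)).card = m - des τ := by
    have := Finset.card_filter_add_card_filter_not (s := (Finset.univ : Finset (Fin m)))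
      (p := fun u => u ∈ Bset τ)
    simp only [Finset.card_univ, Fintype.card_fin] at this
    rw [hBc] at this
    omega
  rw [hBc, hBc2, succ_nsmul]
  ring

lemma sum_exc_succ (m : ℕ) :
    ∑ σ : Perm (Fin (m+1)), (X : ℚ[X]) ^ exc σ
      = ∑ τ : Perm (Fin m), ((exc τ + 1) • X ^ exc τ + (m - exc τ) • X ^ (exc τ + 1)) := by
  rw [← Fintype.sum_bijective _ (ins_bijective (fun p => Equiv.swap p (Fin.last m))
    (fun p => Equiv.swap_apply_left p (Fin.last m))) _ _ (fun x => rfl)]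
  rw [Fintype.sum_prod_type]
  exact Finset.sum_congr rfl fun τ _ => sum_excIns τ

lemma sum_des_succ (m : ℕ) :
    ∑ σ : Perm (Fin (m+1)), (X : ℚ[X]) ^ des σ
      = ∑ τ : Perm (Fin m), ((des τ + 1) • X ^ des τ + (m - des τ) • X ^ (des τ + 1)) := by
  rw [← Fintype.sum_bijective _ (ins_bijective posPerm posPerm_self) _ _ (fun x => rfl)]
  rw [Fintype.sum_prod_type]
  exact Finset.sum_congr rfl fun τ _ => sum_desIns τ

lemma count_eq_of_sum_pow_eq {α : Type*} [Fintype α] [DecidableEq α] (f g : α → ℕ)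
    (h : ∑ a : α, (X : ℚ[X]) ^ (f a) = ∑ a : α, (X : ℚ[X]) ^ (g a)) (F : ℕ → ℚ[X]) :
    ∑ a : α, F (f a) = ∑ a : α, F (g a) := by
  have hcnt : ∀ e : ℕ, (Finset.univ.filter fun a => f a = e).card
      = (Finset.univ.filter fun a => g a = e).card := by
    intro e
    have hc := congrArg (fun p => Polynomial.coeff p e) h
    simp only [Polynomial.finset_sum_coeff, Polynomial.coeff_X_pow] at hc
    have hf : ∀ (f : α → ℕ), (∑ a : α, if e = f a then (1:ℚ) else 0)
        = ((Finset.univ.filter fun a => f a = e).card : ℚ) := by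
      intro f
      rw [Finset.card_filter]
      push_cast
      refine Finset.sum_congr rfl fun a _ => ?_
      simp [eq_comm]
    rw [hf f, hf g] at hc
    exact_mod_cast hc
  obtain ⟨N, hN⟩ : ∃ N : ℕ, ∀ a : α, f a < N ∧ g a < N := by
    refine ⟨(Finset.univ.sup f) + (Finset.univ.sup g) + 1, fun a => ⟨?_, ?_⟩⟩
    · have := Finset.le_sup (f := f) (Finset.mem_univ a); omega
    · have := Finset.le_sup (f := g) (Finset.mem_univ a); omega
  have key : ∀ (f : α → ℕ), (∀ a : α, f a < N) →
      ∑ a : α, F (f a) = ∑ e ∈ Finset.range N, (Finset.univ.filter fun a => f a = e).card • F e := by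
    intro f hfN
    have : ∀ a : α, F (f a) = ∑ e ∈ Finset.range N, if f a = e then F e else 0 := by
      intro a
      rw [Finset.sum_ite_eq (Finset.range N) (f a) F]
      rw [if_pos (Finset.mem_range.2 (hfN a))]
    rw [Finset.sum_congr rfl fun a _ => this a, Finset.sum_comm]
    refine Finset.sum_congr rfl fun e _ => ?_
    rw [Finset.sum_ite, Finset.sum_const, Finset.sum_const_zero, add_zero]
  rw [key f (fun a => (hN a).1), key g (fun a => (hN a).2)]
  exact Finset.sum_congr rfl fun e _ => by rw [hcnt e]

lemma sum_exc_eq_sum_des : ∀ m : ℕ,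
    (∑ σ : Perm (Fin m), (X : ℚ[X]) ^ exc σ) = ∑ σ : Perm (Fin m), (X : ℚ[X]) ^ des σ := by
  intro m
  induction m with
  | zero =>
    refine Finset.sum_congr rfl fun σ _ => ?_
    congr 1
  | succ m ih =>
    rw [sum_exc_succ, sum_des_succ]
    exact count_eq_of_sum_pow_eq exc des ih
      (fun e => (e + 1) • X ^ e + (m - e) • X ^ (e + 1))

section PartA

variable {n k : ℕ}

def phi (hk : 0 < k) (i : Fin n) : Fin k := ⟨(i : ℕ) % k, Nat.mod_lt _ hk⟩

def fc (hk : 0 < k) (r : Fin k) : ℕ := Fintype.card {i : Fin n // phi hk i = r}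

noncomputable def psi (hk : 0 < k) (r : Fin k) : Fin (fc (n := n) hk r) ≃o {i : Fin n // phi hk i = r} :=
  Fintype.orderIsoFinOfCardEq _ rfl

noncomputable def liftPerm (hk : 0 < k) (τs : ∀ r : Fin k, Perm (Fin (fc (n := n) hk r))) :
    Perm (Fin n) :=
  (Equiv.sigmaFiberEquiv (phi hk)).permCongr
    (Equiv.sigmaCongrRight (fun r => ((psi hk r).toEquiv).permCongr (τs r)))

lemma liftPerm_apply (hk : 0 < k) (τs : ∀ r : Fin k, Perm (Fin (fc (n := n) hk r))) (i : Fin n) :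
    liftPerm hk τs i = ((psi hk (phi hk i)) (τs (phi hk i) ((psi hk (phi hk i)).symm ⟨i, rfl⟩))).val := by
  simp [liftPerm, Equiv.permCongr_apply, Equiv.sigmaFiberEquiv]

lemma liftPerm_apply' (hk : 0 < k) (τs : ∀ r : Fin k, Perm (Fin (fc (n := n) hk r)))
    (r : Fin k) (x : {i : Fin n // phi hk i = r}) :
    liftPerm hk τs x.val = ((psi hk r) (τs r ((psi hk r).symm x))).val := by
  obtain ⟨i, hi⟩ := x
  subst hi
  exact liftPerm_apply hk τs i

lemma liftPerm_psi (hk : 0 < k) (τs : ∀ r : Fin k, Perm (Fin (fc (n := n) hk r)))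
    (r : Fin k) (y : Fin (fc (n := n) hk r)) :
    liftPerm hk τs ((psi hk r) y).val = ((psi hk r) (τs r y)).val := by
  rw [liftPerm_apply' hk τs r ((psi hk r) y), OrderIso.symm_apply_apply]

lemma phi_liftPerm (hk : 0 < k) (τs : ∀ r : Fin k, Perm (Fin (fc (n := n) hk r))) (i : Fin n) :
    phi hk (liftPerm hk τs i) = phi hk i := by
  rw [liftPerm_apply]
  exact ((psi hk (phi hk i)) (τs (phi hk i) ((psi hk (phi hk i)).symm ⟨i, rfl⟩))).2

lemma exc_liftPerm (hk : 0 < k) (τs : ∀ r : Fin k, Perm (Fin (fc (n := n) hk r))) :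
    exc (liftPerm hk τs) = ∑ r : Fin k, exc (τs r) := by
  rw [exc_eq_sum, ← Fintype.sum_fiberwise (phi hk)]
  refine Finset.sum_congr rfl fun r _ => ?_
  rw [exc_eq_sum]
  rw [← Equiv.sum_comp (psi hk r).toEquiv
    (fun x : {i : Fin n // phi hk i = r} => if liftPerm hk τs x.val > x.val then (1:ℕ) else 0)]
  simp only [RelIso.coe_fn_toEquiv]
  refine Finset.sum_congr rfl fun y _ => ?_
  simp only [liftPerm_psi]
  refine if_congr ?_ rfl rfl
  exact Subtype.coe_lt_coe.trans (psi hk r).lt_iff_lt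

def resPerm (hk : 0 < k) (π : Perm (Fin n)) (h : ∀ i, phi hk (π i) = phi hk i) (r : Fin k) :
    Perm {i : Fin n // phi hk i = r} :=
  π.subtypePerm (fun i => by rw [h i])

lemma liftPerm_resPerm (hk : 0 < k) (π : Perm (Fin n)) (h : ∀ i, phi hk (π i) = phi hk i) :
    liftPerm hk (fun r => ((psi hk r).toEquiv.symm).permCongr (resPerm hk π h r)) = π := by
  apply Equiv.ext
  intro i
  rw [liftPerm_apply]
  simp only [Equiv.permCongr_apply, Equiv.symm_symm, RelIso.coe_fn_toEquiv,
    OrderIso.apply_symm_apply, resPerm, Equiv.Perm.subtypePerm_apply]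
  simp


lemma liftPerm_injective (hk : 0 < k) :
    Function.Injective (liftPerm (n := n) hk) := by
  intro a b hab
  funext r
  apply Equiv.ext
  intro y
  have h := congrArg (fun (σ : Perm (Fin n)) => σ (((psi hk r) y).val)) hab
  rw [liftPerm_psi, liftPerm_psi] at h
  exact (psi hk r).injective (Subtype.coe_injective h)

lemma modint (k : ℕ) (a b : ℕ) :
    ((a : ℤ) - (b : ℤ) ≡ 0 [ZMOD (k : ℤ)]) ↔ a % k = b % k := by
  rw [Int.modEq_zero_iff_dvd, ← Int.modEq_iff_dvd]
  constructor
  · intro h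
    have h2 : (b : ℤ) % (k : ℤ) = (a : ℤ) % (k : ℤ) := h
    rw [← Int.natCast_mod, ← Int.natCast_mod] at h2
    exact_mod_cast h2.symm
  · intro h
    show (b : ℤ) % (k : ℤ) = (a : ℤ) % (k : ℤ)
    rw [← Int.natCast_mod, ← Int.natCast_mod]
    exact_mod_cast h.symm

lemma mem_MP_iff (hk : 0 < k) (π : Perm (Fin n)) :
    π ∈ MP n k 1 ↔ ∀ i, phi hk (π i) = phi hk i := by
  rw [MP, Finset.mem_filter]
  simp only [Finset.mem_univ, true_and, Nat.cast_one, sub_self]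
  refine forall_congr' fun i => ?_
  rw [modint]
  constructor
  · exact fun h => Fin.ext h
  · exact fun h => congrArg Fin.val h

lemma range_filter_mod (k r : ℕ) (hk : 0 < k) (hr : r < k) (N : ℕ) :
    (((Finset.range N).filter (fun x => x % k = r)).card) = N / k + if r < N % k then 1 else 0 := by
  induction N with
  | zero => simp
  | succ N ih =>
    rw [Finset.range_add_one, Finset.filter_insert]
    have hNd := Nat.div_add_mod N k
    have hNm := Nat.mod_lt N hk
    have key : (N+1) / k + (if r < (N+1) % k then 1 else 0)
        = N / k + (if r < N % k then 1 else 0) + (if N % k = r then 1 else 0) := by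
      rcases Nat.lt_or_ge (N % k + 1) k with hlt | hge
      · have hsplit : N + 1 = (N % k + 1) + k * (N / k) := by omega
        have e1 : (N+1) % k = N % k + 1 := by
          rw [hsplit, Nat.add_mul_mod_self_left, Nat.mod_eq_of_lt hlt]
        have e2 : (N+1) / k = N / k := by
          rw [hsplit, Nat.add_mul_div_left _ _ hk, Nat.div_eq_of_lt hlt, zero_add]
        rw [e1, e2]
        split_ifs <;> omega
      · have hk1 : N % k + 1 = k := by omega
        have hsplit : N + 1 = k * (N / k) + k := by omega
        have e1 : (N+1) % k = 0 := by
          rw [hsplit, ← Nat.mul_succ, Nat.mul_mod_right]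
        have e2 : (N+1) / k = N / k + 1 := by
          rw [hsplit, ← Nat.mul_succ, Nat.mul_div_cancel_left _ hk]
        rw [e1, e2]
        split_ifs <;> omega
    by_cases h : N % k = r
    · rw [if_pos h, Finset.card_insert_of_notMem (by simp), ih, key, if_pos h]
    · rw [if_neg h, ih, key, if_neg h, add_zero]

lemma fc_eq (hk : 0 < k) (r : Fin k) :
    fc (n := n) hk r = ((Finset.range n).filter (fun x => x % k = (r : ℕ))).card := by
  rw [fc, Fintype.card_subtype, Finset.card_filter, Finset.card_filter,
    ← Fin.sum_univ_eq_sum_range (fun x => if x % k = (r : ℕ) then (1:ℕ) else 0) n]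
  refine Finset.sum_congr rfl fun i _ => if_congr ?_ rfl rfl
  exact ⟨fun h => congrArg Fin.val h, fun h => Fin.ext h⟩

end PartA

end S9

theorem stmt9 (n k m j : ℕ) (hn : 0 < n) (hk : 0 < k) (hnd : ¬ k ∣ n)
    (hj1 : 1 ≤ j) (hj2 : j ≤ k - 1) (hmj : n = m * k + j) :
    ∑ π ∈ MP n k 1, (X : ℚ[X]) ^ exc π = (Eulerian (m + 1)) ^ j * (Eulerian m) ^ (k - j) := by
  classical
  have hjk : j < k := by omega
  have hdiv : n / k = m := by
    rw [hmj, Nat.add_comm, Nat.add_mul_div_right _ _ hk, Nat.div_eq_of_lt hjk, zero_add]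
  have hmod : n % k = j := by
    rw [hmj, Nat.add_comm, Nat.add_mul_mod_self_right, Nat.mod_eq_of_lt hjk]
  have hfc : ∀ r : Fin k, S9.fc (n := n) hk r = if (r : ℕ) < j then m + 1 else m := by
    intro r
    rw [S9.fc_eq hk r, S9.range_filter_mod k (r : ℕ) hk r.isLt n, hdiv, hmod]
    split_ifs <;> omega
  have step1 : ∑ π ∈ MP n k 1, (X : ℚ[X]) ^ exc π
      = ∑ τs ∈ (Finset.univ : Finset (∀ r : Fin k, Perm (Fin (S9.fc (n := n) hk r)))),
          (X : ℚ[X]) ^ exc (S9.liftPerm hk τs) := by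
    refine (Finset.sum_bij (fun τs _ => S9.liftPerm hk τs) ?_ ?_ ?_ ?_).symm
    · intro τs _
      exact (S9.mem_MP_iff hk _).2 (S9.phi_liftPerm hk τs)
    · intro a _ b _ hab
      exact S9.liftPerm_injective hk hab
    · intro π hπ
      exact ⟨_, Finset.mem_univ _, S9.liftPerm_resPerm hk π ((S9.mem_MP_iff hk π).1 hπ)⟩
    · intro τs _
      rfl
  rw [step1]
  have step2 : ∀ τs : (∀ r : Fin k, Perm (Fin (S9.fc (n := n) hk r))),
      (X : ℚ[X]) ^ exc (S9.liftPerm hk τs) = ∏ r : Fin k, (X : ℚ[X]) ^ exc (τs r) := by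
    intro τs
    rw [S9.exc_liftPerm, ← Finset.prod_pow_eq_pow_sum]
  rw [Finset.sum_congr rfl fun τs _ => step2 τs]
  rw [← Fintype.piFinset_univ]
  have huniv := Finset.prod_univ_sum (t := fun r : Fin k => (Finset.univ : Finset (Perm (Fin (S9.fc (n := n) hk r)))))
    (f := fun r τ => (X : ℚ[X]) ^ exc τ)
  rw [← huniv]
  have step3 : ∀ r : Fin k,
      (∑ τ : Perm (Fin (S9.fc (n := n) hk r)), (X : ℚ[X]) ^ exc τ)
        = if (r : ℕ) < j then Eulerian (m+1) else Eulerian m := by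
    intro r
    rw [S9.sum_exc_eq_sum_des]
    have : ∑ τ : Perm (Fin (S9.fc (n := n) hk r)), (X : ℚ[X]) ^ des τ
        = Eulerian (S9.fc (n := n) hk r) := rfl
    rw [this, hfc r]
    split_ifs <;> rfl
  rw [Finset.prod_congr rfl fun r _ => step3 r]
  rw [Finset.prod_ite, Finset.prod_const, Finset.prod_const]
  have hcard : (Finset.univ.filter fun r : Fin k => (r : ℕ) < j).card = j := by
    rw [Finset.card_filter, Fin.sum_univ_eq_sum_range (fun x => if x < j then (1:ℕ) else 0) k,
      ← Finset.card_filter]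
    have : (Finset.range k).filter (fun x => x < j) = Finset.range j := by
      ext x
      simp only [Finset.mem_filter, Finset.mem_range]
      omega
    rw [this, Finset.card_range]
  have hcard2 : (Finset.univ.filter fun r : Fin k => ¬ (r : ℕ) < j).card = k - j := by
    have := Finset.card_filter_add_card_filter_not
      (s := (Finset.univ : Finset (Fin k))) (p := fun r : Fin k => (r : ℕ) < j)
    simp only [Finset.card_univ, Fintype.card_fin] at this
    omega
  rw [hcard, hcard2]
end

section
/- Let k and m be positive integers and let n = mk. Then ∑_{π ∈ MP_{n,1}^k} t^{exc(π)} = A_m(t)^k as polynomials in ℚ[t]. -/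
open Polynomial Finset

-- extension of a perm of Fin m to Fin (m+1) fixing the last element
def extPerm {m : ℕ} (τ : Equiv.Perm (Fin m)) : Equiv.Perm (Fin (m + 1)) :=
  (finSuccEquivLast.symm.permCongr) (τ.optionCongr)

@[simp] lemma extPerm_castSucc {m : ℕ} (τ : Equiv.Perm (Fin m)) (x : Fin m) :
    extPerm τ x.castSucc = (τ x).castSucc := by
  simp [extPerm, Equiv.permCongr_apply]

@[simp] lemma extPerm_last {m : ℕ} (τ : Equiv.Perm (Fin m)) :
    extPerm τ (Fin.last m) = Fin.last m := by
  simp [extPerm, Equiv.permCongr_apply]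

def dP {m : ℕ} (p : Fin (m + 1)) : Equiv.Perm (Fin (m + 1)) :=
  (finSuccEquiv' p).trans finSuccEquivLast.symm

@[simp] lemma dP_self {m : ℕ} (p : Fin (m + 1)) : dP p p = Fin.last m := by
  simp [dP, finSuccEquiv'_at]

@[simp] lemma dP_succAbove {m : ℕ} (p : Fin (m + 1)) (j : Fin m) :
    dP p (p.succAbove j) = j.castSucc := by
  simp [dP, finSuccEquiv'_succAbove]

@[simp] lemma dP_symm_last {m : ℕ} (p : Fin (m + 1)) : (dP p)⁻¹ (Fin.last m) = p := by
  show (dP p).symm (Fin.last m) = p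
  simp [dP, finSuccEquiv'_symm_none]

lemma extPerm_injective {m : ℕ} : Function.Injective (extPerm (m := m)) := by
  intro τ τ' h
  ext x
  have := congrArg (fun ρ : Equiv.Perm (Fin (m+1)) => ρ x.castSucc) h
  simp only [extPerm_castSucc, Fin.castSucc_inj] at this; exact congrArg Fin.val this

lemma ins_bijective {m : ℕ} (g : Fin (m + 1) → Equiv.Perm (Fin (m + 1)))
    (hg : ∀ i, (g i)⁻¹ (Fin.last m) = i) :
    Function.Bijective (fun x : Equiv.Perm (Fin m) × Fin (m + 1) => extPerm x.1 * g x.2) := by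
  rw [Fintype.bijective_iff_injective_and_card]
  constructor
  · rintro ⟨τ, i⟩ ⟨τ', i'⟩ h
    simp only at h
    have hi : i = i' := by
      have h1 : (extPerm τ * g i)⁻¹ (Fin.last m) = (extPerm τ' * g i')⁻¹ (Fin.last m) := by rw [h]
      have h2 : ∀ (τ : Equiv.Perm (Fin m)) (i : Fin (m+1)),
          (extPerm τ * g i)⁻¹ (Fin.last m) = i := by
        intro τ i
        rw [mul_inv_rev]
        have : (extPerm τ)⁻¹ (Fin.last m) = Fin.last m := by
          rw [Equiv.Perm.inv_eq_iff_eq]; simp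
        simp [Equiv.Perm.mul_apply, this, hg]
      rw [h2, h2] at h1; exact h1
    subst hi
    have := mul_right_cancel h
    rw [extPerm_injective this]
  · simp [Fintype.card_perm, Fintype.card_fin, Nat.factorial_succ, mul_comm]

lemma exc_eq_sum {M : ℕ} (ρ : Equiv.Perm (Fin M)) :
    exc ρ = ∑ i : Fin M, if i < ρ i then 1 else 0 := by
  rw [exc, Finset.card_filter]

lemma exc_extPerm {m : ℕ} (τ : Equiv.Perm (Fin m)) : exc (extPerm τ) = exc τ := by
  rw [exc_eq_sum, exc_eq_sum, Fin.sum_univ_castSucc]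
  simp only [extPerm_castSucc, Fin.castSucc_lt_castSucc_iff, extPerm_last, lt_self_iff_false,
    if_false, add_zero]

-- helper for replacing one value in a sum
lemma sum_update_one {α : Type*} [Fintype α] [DecidableEq α] (G : α → ℕ) (hG : ∀ x, G x ≤ 1)
    (i : α) :
    (∑ x, if x = i then 1 else G x) + G i = (∑ x, G x) + 1 := by
  rw [← Finset.sum_erase_add Finset.univ _ (Finset.mem_univ i),
      ← Finset.sum_erase_add Finset.univ G (Finset.mem_univ i)]
  have : ∑ x ∈ Finset.univ.erase i, (if x = i then 1 else G x) = ∑ x ∈ Finset.univ.erase i, G x :=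
    Finset.sum_congr rfl fun x hx => by
      rw [if_neg (Finset.ne_of_mem_erase hx)]
  rw [this]; simp; omega

lemma exc_ins {m : ℕ} (τ : Equiv.Perm (Fin m)) (i' : Fin m) :
    exc (extPerm τ * Equiv.swap (Fin.last m) i'.castSucc)
      = if i' < τ i' then exc τ else exc τ + 1 := by
  have key : exc (extPerm τ * Equiv.swap (Fin.last m) i'.castSucc)
      = ∑ x : Fin m, if x = i' then 1 else (if x < τ x then 1 else 0) := by
    rw [exc_eq_sum, Fin.sum_univ_castSucc]
    have hlast : (extPerm τ * Equiv.swap (Fin.last m) i'.castSucc) (Fin.last m)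
        = (τ i').castSucc := by
      simp [Equiv.Perm.mul_apply, Equiv.swap_apply_left]
    rw [hlast]
    have : ¬ (Fin.last m < (τ i').castSucc) := by
      exact not_lt.2 (le_of_lt (Fin.castSucc_lt_last _))
    rw [if_neg this, add_zero]
    refine Finset.sum_congr rfl fun x _ => ?_
    by_cases hx : x = i'
    · subst hx
      have : (extPerm τ * Equiv.swap (Fin.last m) x.castSucc) x.castSucc = Fin.last m := by
        simp [Equiv.Perm.mul_apply, Equiv.swap_apply_right]
      rw [this, if_pos rfl, if_pos (Fin.castSucc_lt_last _)]
    · have hne1 : x.castSucc ≠ Fin.last m := Fin.ne_of_lt (Fin.castSucc_lt_last _)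
      have hne2 : x.castSucc ≠ i'.castSucc := by
        simp [Fin.castSucc_inj, hx]
      have : (extPerm τ * Equiv.swap (Fin.last m) i'.castSucc) x.castSucc
          = (τ x).castSucc := by
        simp [Equiv.Perm.mul_apply, Equiv.swap_apply_of_ne_of_ne hne1 hne2]
      rw [this]; simp [Fin.castSucc_lt_castSucc_iff, hx]
  have h2 := sum_update_one (fun x : Fin m => if x < τ x then 1 else 0)
      (fun x => by split <;> omega) i'
  rw [key]
  rw [exc_eq_sum τ] at *
  by_cases h : i' < τ i'
  · simp only [if_pos h] at h2 ⊢; omega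
  · simp only [if_neg h] at h2 ⊢; omega

lemma exc_card_filter {m : ℕ} (τ : Equiv.Perm (Fin m)) :
    (Finset.univ.filter fun i : Fin m => i < τ i).card = exc τ := by
  rw [exc_eq_sum, Finset.card_filter]

lemma exc_le {m : ℕ} (τ : Equiv.Perm (Fin m)) : exc τ ≤ m := by
  rw [exc]
  exact le_trans (Finset.card_filter_le _ _) (by simp)

lemma sum_ins_exc {m : ℕ} (τ : Equiv.Perm (Fin m)) :
    ∑ i : Fin (m + 1), (X : ℚ[X]) ^ exc (extPerm τ * Equiv.swap (Fin.last m) i)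
      = (exc τ + 1) • X ^ exc τ + (m - exc τ) • X ^ (exc τ + 1) := by
  rw [Fin.sum_univ_castSucc]
  have hlast : extPerm τ * Equiv.swap (Fin.last m) (Fin.last m) = extPerm τ := by
    rw [Equiv.swap_self]
    exact mul_one _
  rw [hlast, exc_extPerm]
  have : ∀ i' : Fin m, (X : ℚ[X]) ^ exc (extPerm τ * Equiv.swap (Fin.last m) i'.castSucc)
      = if i' < τ i' then X ^ exc τ else X ^ (exc τ + 1) := by
    intro i'
    rw [exc_ins]
    split <;> rfl
  rw [Finset.sum_congr rfl fun i' _ => this i']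
  rw [Finset.sum_ite, Finset.sum_const, Finset.sum_const, exc_card_filter]
  have hcard : (Finset.univ.filter fun i : Fin m => ¬ i < τ i).card = m - exc τ := by
    have := Finset.card_filter_add_card_filter_not (s := (Finset.univ : Finset (Fin m)))
      (fun i : Fin m => i < τ i)
    rw [exc_card_filter] at this
    simp only [Finset.card_univ, Fintype.card_fin] at this
    omega
  rw [hcard]
  rw [succ_nsmul]
  ring

def rv {M : ℕ} (ρ : Equiv.Perm (Fin M)) : ℕ → ℕ := fun i =>
  if h : i < M then (ρ ⟨i, h⟩ : ℕ) else 0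

lemma des_eq_desN {M : ℕ} (ρ : Equiv.Perm (Fin M)) :
    des ρ = ∑ i ∈ Finset.range M, (if i + 1 < M ∧ rv ρ (i + 1) < rv ρ i then 1 else 0) := by
  rw [des, Finset.card_filter, ← Fin.sum_univ_eq_sum_range
    (fun i => if i + 1 < M ∧ rv ρ (i + 1) < rv ρ i then 1 else 0) M]
  refine Finset.sum_congr rfl fun i _ => ?_
  by_cases h : (i : ℕ) + 1 < M
  · have h1 : (⟨((i : ℕ) + 1) % M, Nat.mod_lt _ i.pos⟩ : Fin M) = ⟨(i : ℕ) + 1, h⟩ :=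
      Fin.ext (Nat.mod_eq_of_lt h)
    rw [h1]
    have h2 : rv ρ ((i : ℕ) + 1) = (ρ ⟨(i : ℕ) + 1, h⟩ : ℕ) := dif_pos h
    have h3 : rv ρ (i : ℕ) = (ρ i : ℕ) := by
      rw [rv, dif_pos i.isLt]
    rw [h2, h3]
    congr 1
  · simp [h]



lemma desN_core (m p : ℕ) (hp : p ≤ m) (F D : ℕ → ℕ)
    (f1 : ∀ i, i + 1 < p → F i = D i) (f2 : ∀ i, i + 1 = p → F i = 0)
    (f3 : p < m → F p = 1) (f4 : ∀ i, p < i → i < m → F i = D (i - 1))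
    (hD0 : ∀ j, m ≤ j + 1 → D j = 0) :
    (∑ i ∈ range m, F i) + (if 0 < p then D (p - 1) else 0)
      = (∑ i ∈ range m, D i) + (if p < m then 1 else 0) := by
  by_cases hpm : p = m
  · subst hpm
    have : ∑ i ∈ range p, F i = ∑ i ∈ range p, D i := by
      refine Finset.sum_congr rfl fun i hi => ?_
      rw [Finset.mem_range] at hi
      rcases Nat.lt_or_ge (i + 1) p with h | h
      · exact f1 i h
      · have he : i + 1 = p := by omega
        rw [f2 i he, hD0 i (by omega)]
    rw [this, if_neg (by omega : ¬ p < p)]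
    rcases Nat.eq_zero_or_pos p with h0 | h0
    · simp [h0]
    · rw [if_pos h0, hD0 (p - 1) (by omega)]
  · have hpm' : p < m := by omega
    rw [if_pos hpm']
    rw [Finset.range_eq_Ico, ← Finset.sum_Ico_consecutive F (Nat.zero_le p) (le_of_lt hpm'),
      ← Finset.sum_Ico_consecutive D (Nat.zero_le p) (le_of_lt hpm')]
    have hIcoF : ∑ i ∈ Ico p m, F i = 1 + ∑ i ∈ Ico p m, D i := by
      rw [Finset.sum_eq_sum_Ico_succ_bot hpm' F]
      have h5 : ∑ i ∈ Ico (p + 1) m, F i = ∑ i ∈ Ico (p + 1) m, (fun i => D (i - 1)) i := by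
        refine Finset.sum_congr rfl fun i hi => ?_
        rw [Finset.mem_Ico] at hi
        exact f4 i (by omega) hi.2
      rw [h5, f3 hpm']
      have hshift : ∑ i ∈ Ico (p + 1) m, (fun i => D (i - 1)) i = ∑ j ∈ Ico p (m - 1), D j := by
        rw [Finset.sum_Ico_eq_sum_range, Finset.sum_Ico_eq_sum_range]
        have h6 : m - (p + 1) = m - 1 - p := by omega
        rw [h6]
        refine Finset.sum_congr rfl fun i _ => ?_
        have h7 : p + 1 + i - 1 = p + i := by omega
        rw [h7]
      rw [hshift]
      have h8 : ∑ i ∈ Ico p m, D i = ∑ j ∈ Ico p (m - 1), D j + D (m - 1) := by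
        have hm1 : m = (m - 1) + 1 := by omega
        nth_rewrite 1 [hm1]
        rw [Finset.sum_Ico_succ_top (by omega : p ≤ m - 1) D]
      rw [h8, hD0 (m - 1) (by omega), add_zero]
    have hIco0 : ∑ i ∈ Ico 0 p, F i + (if 0 < p then D (p - 1) else 0) = ∑ i ∈ Ico 0 p, D i := by
      rcases Nat.eq_zero_or_pos p with h0 | h0
      · simp [h0]
      · rw [if_pos h0]
        obtain ⟨q, rfl⟩ : ∃ q, p = q + 1 := ⟨p - 1, by omega⟩
        rw [Finset.sum_Ico_succ_top (Nat.zero_le q) F, Finset.sum_Ico_succ_top (Nat.zero_le q) D]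
        have h1 : ∑ i ∈ Ico 0 q, F i = ∑ i ∈ Ico 0 q, D i := by
          refine Finset.sum_congr rfl fun i hi => ?_
          rw [Finset.mem_Ico] at hi
          exact f1 i (by omega)
        have h2 : F q = 0 := f2 q rfl
        have h3 : q + 1 - 1 = q := by omega
        rw [h1, h2, h3, add_zero]
    omega

lemma rv_lt {M : ℕ} (ρ : Equiv.Perm (Fin M)) (i : ℕ) (h : i < M) : rv ρ i < M := by
  rw [rv, dif_pos h]; exact (ρ ⟨i, h⟩).isLt

lemma rv_ins {m : ℕ} (τ : Equiv.Perm (Fin m)) (p : Fin (m + 1)) (i : ℕ) (hi : i ≤ m) :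
    rv (extPerm τ * dP p) i
      = if i = p.val then m else if i < p.val then rv τ i else rv τ (i - 1) := by
  have him : i < m + 1 := by omega
  rw [rv, dif_pos him]
  by_cases h1 : i = p.val
  · have : (⟨i, him⟩ : Fin (m + 1)) = p := Fin.ext h1
    rw [this, if_pos h1]
    simp [Equiv.Perm.mul_apply]
  · rw [if_neg h1]
    by_cases h2 : i < p.val
    · have him' : i < m := by
        have := p.isLt; omega
      set j : Fin m := ⟨i, him'⟩ with hj
      have hcs : j.castSucc < p := by
        rw [Fin.lt_def]; exact h2
      have : (⟨i, him⟩ : Fin (m + 1)) = p.succAbove j :=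
        Fin.ext (by rw [Fin.succAbove_of_castSucc_lt _ _ hcs]; rfl)
      rw [this, if_pos h2]
      simp only [Equiv.Perm.mul_apply, dP_succAbove, extPerm_castSucc]
      rw [rv, dif_pos him']
      rfl
    · have hpi : p.val < i := by omega
      have hjm : i - 1 < m := by omega
      set j : Fin m := ⟨i - 1, hjm⟩ with hj
      have hle : p ≤ j.castSucc := by
        rw [Fin.le_def]
        show p.val ≤ i - 1
        omega
      have : (⟨i, him⟩ : Fin (m + 1)) = p.succAbove j :=
        Fin.ext (by rw [Fin.succAbove_of_le_castSucc _ _ hle]; show i = i - 1 + 1; omega)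
      rw [this, if_neg h2]
      simp only [Equiv.Perm.mul_apply, dP_succAbove, extPerm_castSucc]
      rw [rv, dif_pos hjm]
      rfl


lemma des_ins {m : ℕ} (τ : Equiv.Perm (Fin m)) (p : Fin (m + 1)) :
    des (extPerm τ * dP p)
        + (if 0 < p.val then
            (if p.val - 1 + 1 < m ∧ rv τ (p.val - 1 + 1) < rv τ (p.val - 1) then 1 else 0)
          else 0)
      = des τ + (if p.val < m then 1 else 0) := by
  have hp : p.val ≤ m := by have := p.isLt; omega
  have hdes : des (extPerm τ * dP p)
      = ∑ i ∈ range m, (fun i =>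
          if i + 1 < m + 1 ∧ rv (extPerm τ * dP p) (i + 1) < rv (extPerm τ * dP p) i
          then 1 else 0) i := by
    rw [des_eq_desN, Finset.sum_range_succ]
    simp
  rw [hdes, des_eq_desN τ]
  refine desN_core m p.val hp
    (fun i => if i + 1 < m + 1 ∧ rv (extPerm τ * dP p) (i + 1) < rv (extPerm τ * dP p) i
      then 1 else 0)
    (fun j => if j + 1 < m ∧ rv τ (j + 1) < rv τ j then 1 else 0) ?_ ?_ ?_ ?_ ?_
  · intro i hip
    rw [rv_ins τ p (i + 1) (by omega), rv_ins τ p i (by omega),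
      if_neg (by omega : ¬ i + 1 = p.val), if_pos (by omega : i + 1 < p.val),
      if_neg (by omega : ¬ i = p.val), if_pos (by omega : i < p.val)]
    have c1 : i + 1 < m + 1 := by omega
    have c2 : i + 1 < m := by omega
    simp [c1, c2]
  · intro i hip
    rw [rv_ins τ p (i + 1) (by omega), rv_ins τ p i (by omega),
      if_pos hip, if_neg (by omega : ¬ i = p.val), if_pos (by omega : i < p.val)]
    have : ¬ (m < rv τ i) := by
      have := rv_lt τ i (by omega)
      omega
    simp [this]
  · intro hpm
    rw [rv_ins τ p (p.val + 1) (by omega), rv_ins τ p p.val (by omega),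
      if_neg (by omega : ¬ p.val + 1 = p.val), if_neg (by omega : ¬ p.val + 1 < p.val),
      if_pos rfl]
    have e1 : p.val + 1 - 1 = p.val := by omega
    rw [e1]
    have := rv_lt τ p.val (by omega)
    have c1 : p.val + 1 < m + 1 := by omega
    simp [c1]
    omega
  · intro i hpi him
    rw [rv_ins τ p (i + 1) (by omega), rv_ins τ p i (by omega),
      if_neg (by omega : ¬ i + 1 = p.val), if_neg (by omega : ¬ i + 1 < p.val),
      if_neg (by omega : ¬ i = p.val), if_neg (by omega : ¬ i < p.val)]
    have e1 : i + 1 - 1 = i := by omega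
    have e2 : i - 1 + 1 = i := by omega
    rw [e1, e2]
    have c1 : i + 1 < m + 1 := by omega
    have c2 : i - 1 + 1 < m := by omega
    rw [e2] at c2
    simp [c1, c2, him]
  · intro j hj
    have : ¬ (j + 1 < m) := by omega
    simp [this]

lemma des_card_filter {m : ℕ} (τ : Equiv.Perm (Fin m)) :
    (Finset.univ.filter fun p' : Fin m => 0 < p'.val ∧
        (p'.val - 1 + 1 < m ∧ rv τ (p'.val - 1 + 1) < rv τ (p'.val - 1))).card = des τ := by
  rw [Finset.card_filter, des_eq_desN]
  rw [Fin.sum_univ_eq_sum_range (fun q =>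
    if 0 < q ∧ (q - 1 + 1 < m ∧ rv τ (q - 1 + 1) < rv τ (q - 1)) then 1 else 0) m]
  rcases Nat.eq_zero_or_pos m with h0 | h0
  · subst h0; simp
  · obtain ⟨m', rfl⟩ : ∃ m', m = m' + 1 := ⟨m - 1, by omega⟩
    rw [Finset.sum_range_succ' (fun q =>
      if 0 < q ∧ (q - 1 + 1 < m' + 1 ∧ rv τ (q - 1 + 1) < rv τ (q - 1)) then 1 else 0) m']
    rw [Finset.sum_range_succ (fun i =>
      if i + 1 < m' + 1 ∧ rv τ (i + 1) < rv τ i then 1 else 0) m']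
    have h1 : ∀ i, (if 0 < i + 1 ∧ (i + 1 - 1 + 1 < m' + 1 ∧ rv τ (i + 1 - 1 + 1) < rv τ (i + 1 - 1))
        then 1 else 0) = (if i + 1 < m' + 1 ∧ rv τ (i + 1) < rv τ i then 1 else 0) := by
      intro i
      have e : i + 1 - 1 = i := by omega
      rw [e]
      congr 1
      simp only [eq_iff_iff]
      constructor
      · rintro ⟨_, h⟩; exact h
      · intro h; exact ⟨by omega, h⟩
    simp only [h1]
    have h2 : ¬ (m' + 1 < m' + 1) := by omega
    simp [h2]

lemma sum_ins_des {m : ℕ} (τ : Equiv.Perm (Fin m)) :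
    ∑ p : Fin (m + 1), (X : ℚ[X]) ^ des (extPerm τ * dP p)
      = (des τ + 1) • X ^ des τ + (m - des τ) • X ^ (des τ + 1) := by
  rw [Fin.sum_univ_castSucc]
  have hlast : des (extPerm τ * dP (Fin.last m)) = des τ := by
    have := des_ins τ (Fin.last m)
    have hv : (Fin.last m).val = m := rfl
    rw [hv] at this
    rcases Nat.eq_zero_or_pos m with h0 | h0
    · subst h0; simpa using this
    · rw [if_pos h0, if_neg (by omega : ¬ m < m)] at this
      have e : m - 1 + 1 = m := by omega
      rw [e] at this
      rw [if_neg (show ¬ (m < m ∧ rv τ m < rv τ (m - 1)) from fun h => absurd h.1 (by omega))]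
        at this
      omega
  rw [hlast]
  have hmain : ∀ p' : Fin m, des (extPerm τ * dP p'.castSucc)
      = if (0 < p'.val ∧ (p'.val - 1 + 1 < m ∧ rv τ (p'.val - 1 + 1) < rv τ (p'.val - 1)))
        then des τ else des τ + 1 := by
    intro p'
    have := des_ins τ p'.castSucc
    have hv : (p'.castSucc).val = p'.val := rfl
    rw [hv, if_pos (by exact p'.isLt : p'.val < m)] at this
    by_cases h0 : 0 < p'.val
    · rw [if_pos h0] at this
      by_cases hc : p'.val - 1 + 1 < m ∧ rv τ (p'.val - 1 + 1) < rv τ (p'.val - 1)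
      · rw [if_pos hc] at this
        rw [if_pos ⟨h0, hc⟩]
        omega
      · rw [if_neg hc] at this
        rw [if_neg (by tauto)]
        omega
    · rw [if_neg h0] at this
      rw [if_neg (by tauto)]
      omega
  calc ∑ p' : Fin m, (X : ℚ[X]) ^ des (extPerm τ * dP p'.castSucc) + X ^ des τ
      = (∑ p' : Fin m, if (0 < p'.val ∧ (p'.val - 1 + 1 < m ∧ rv τ (p'.val - 1 + 1) < rv τ (p'.val - 1)))
          then (X : ℚ[X]) ^ des τ else X ^ (des τ + 1)) + X ^ des τ := by
        congr 1
        refine Finset.sum_congr rfl fun p' _ => ?_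
        rw [hmain p']
        split <;> rfl
    _ = (des τ + 1) • X ^ des τ + (m - des τ) • X ^ (des τ + 1) := by
        rw [Finset.sum_ite, Finset.sum_const, Finset.sum_const, des_card_filter]
        have hcard : (Finset.univ.filter fun p' : Fin m => ¬ (0 < p'.val ∧
            (p'.val - 1 + 1 < m ∧ rv τ (p'.val - 1 + 1) < rv τ (p'.val - 1)))).card
            = m - des τ := by
          have := Finset.card_filter_add_card_filter_not
            (s := (Finset.univ : Finset (Fin m)))
            (fun p' : Fin m => 0 < p'.val ∧
              (p'.val - 1 + 1 < m ∧ rv τ (p'.val - 1 + 1) < rv τ (p'.val - 1)))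
          rw [des_card_filter] at this
          simp only [Finset.card_univ, Fintype.card_fin] at this
          omega
        rw [hcard, succ_nsmul]
        ring

lemma des_le {m : ℕ} (τ : Equiv.Perm (Fin m)) : des τ ≤ m := by
  rw [des]
  exact le_trans (Finset.card_filter_le _ _) (by simp)

lemma stat_sum_congr {m : ℕ} (s1 s2 : Equiv.Perm (Fin m) → ℕ)
    (h1 : ∀ τ, s1 τ ≤ m) (h2 : ∀ τ, s2 τ ≤ m)
    (h : ∑ τ : Equiv.Perm (Fin m), (X : ℚ[X]) ^ s1 τ
        = ∑ τ : Equiv.Perm (Fin m), (X : ℚ[X]) ^ s2 τ)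
    (Φ : ℕ → ℚ[X]) :
    ∑ τ : Equiv.Perm (Fin m), Φ (s1 τ) = ∑ τ : Equiv.Perm (Fin m), Φ (s2 τ) := by
  have hcard : ∀ e : ℕ, (Finset.univ.filter fun τ : Equiv.Perm (Fin m) => s1 τ = e).card
      = (Finset.univ.filter fun τ : Equiv.Perm (Fin m) => s2 τ = e).card := by
    intro e
    have hc := congrArg (fun q : ℚ[X] => q.coeff e) h
    simp only [Polynomial.finset_sum_coeff, Polynomial.coeff_X_pow] at hc
    have conv1 : ∀ s : Equiv.Perm (Fin m) → ℕ,
        (∑ τ : Equiv.Perm (Fin m), if e = s τ then (1:ℚ) else 0)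
        = ((Finset.univ.filter fun τ : Equiv.Perm (Fin m) => s τ = e).card : ℚ) := by
      intro s
      rw [Finset.card_filter]
      push_cast
      exact Finset.sum_congr rfl fun τ _ => by
        by_cases hh : s τ = e
        · rw [if_pos hh, if_pos hh.symm]
        · rw [if_neg hh, if_neg (fun hq => hh hq.symm)]
    rw [conv1 s1, conv1 s2] at hc
    exact_mod_cast hc
  have key : ∀ s : Equiv.Perm (Fin m) → ℕ, (∀ τ, s τ ≤ m) →
      ∑ τ : Equiv.Perm (Fin m), Φ (s τ)
        = ∑ e ∈ Finset.range (m + 1),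
            (Finset.univ.filter fun τ : Equiv.Perm (Fin m) => s τ = e).card • Φ e := by
    intro s hs
    rw [← Finset.sum_fiberwise_of_maps_to (g := s) (t := Finset.range (m + 1))
      (fun τ _ => Finset.mem_range.2 (by have := hs τ; omega)) (fun τ => Φ (s τ))]
    refine Finset.sum_congr rfl fun e _ => ?_
    have hconst : ∑ τ ∈ Finset.univ.filter (fun τ => s τ = e), Φ (s τ)
        = ∑ τ ∈ Finset.univ.filter (fun τ => s τ = e), Φ e :=
      Finset.sum_congr rfl fun τ hτ => by rw [(Finset.mem_filter.1 hτ).2]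
    rw [hconst, Finset.sum_const]
  rw [key s1 h1, key s2 h2]
  exact Finset.sum_congr rfl fun e _ => by rw [hcard e]

theorem exc_des_sum (m : ℕ) :
    ∑ σ : Equiv.Perm (Fin m), (X : ℚ[X]) ^ exc σ
      = ∑ σ : Equiv.Perm (Fin m), (X : ℚ[X]) ^ des σ := by
  induction m with
  | zero =>
    refine Finset.sum_congr rfl fun σ _ => ?_
    have h1 : exc σ = 0 := by simp [exc]
    have h2 : des σ = 0 := by simp [des]
    rw [h1, h2]
  | succ m ih =>
    have hbl := ins_bijective (m := m) (fun i => Equiv.swap (Fin.last m) i)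
      (fun i => by rw [Equiv.swap_inv, Equiv.swap_apply_left])
    have hbd := ins_bijective (m := m) (fun p => dP p) (fun p => dP_symm_last p)
    have e1 : ∑ σ : Equiv.Perm (Fin (m + 1)), (X : ℚ[X]) ^ exc σ
        = ∑ x : Equiv.Perm (Fin m) × Fin (m + 1),
            (X : ℚ[X]) ^ exc (extPerm x.1 * Equiv.swap (Fin.last m) x.2) :=
      (Fintype.sum_bijective _ hbl _ _ (fun x => rfl)).symm
    have e2 : ∑ σ : Equiv.Perm (Fin (m + 1)), (X : ℚ[X]) ^ des σ
        = ∑ x : Equiv.Perm (Fin m) × Fin (m + 1),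
            (X : ℚ[X]) ^ des (extPerm x.1 * dP x.2) :=
      (Fintype.sum_bijective _ hbd _ _ (fun x => rfl)).symm
    rw [e1, e2, Fintype.sum_prod_type, Fintype.sum_prod_type]
    rw [Finset.sum_congr rfl (fun τ _ => sum_ins_exc τ),
      Finset.sum_congr rfl (fun τ _ => sum_ins_des τ)]
    exact stat_sum_congr exc des exc_le des_le ih
      (fun e => (e + 1) • X ^ e + (m - e) • X ^ (e + 1))

def Psi {m k : ℕ} (f : Fin k → Equiv.Perm (Fin m)) : Equiv.Perm (Fin (m * k)) :=
  (finProdFinEquiv (m := m) (n := k)).permCongr (Equiv.prodCongrLeft fun j => f j)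

lemma Psi_apply {m k : ℕ} (f : Fin k → Equiv.Perm (Fin m)) (a : Fin m) (j : Fin k) :
    Psi f (finProdFinEquiv (a, j)) = finProdFinEquiv (f j a, j) := by
  simp [Psi, Equiv.permCongr_apply, Equiv.prodCongrLeft_apply]

lemma Psi_mem {m k : ℕ} (f : Fin k → Equiv.Perm (Fin m)) : Psi f ∈ MP (m * k) k 1 := by
  rw [MP, Finset.mem_filter]
  refine ⟨Finset.mem_univ _, fun i => ?_⟩
  obtain ⟨x, rfl⟩ : ∃ x, finProdFinEquiv x = i := ⟨finProdFinEquiv.symm i, Equiv.apply_symm_apply _ _⟩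
  obtain ⟨a, j⟩ := x
  rw [Psi_apply]
  have h0 : (((1:ℕ):ℤ)) - 1 = 0 := by norm_num
  rw [h0]
  have hv1 : ((finProdFinEquiv (f j a, j) : Fin (m * k)) : ℤ) = (j : ℤ) + k * ((f j a : ℕ) : ℤ) := by
    have := finProdFinEquiv_apply_val (f j a, j)
    push_cast [this]
    ring
  have hv2 : ((finProdFinEquiv (a, j) : Fin (m * k)) : ℤ) = (j : ℤ) + k * ((a : ℕ) : ℤ) := by
    have := finProdFinEquiv_apply_val (a, j)
    push_cast [this]
    ring
  rw [hv1, hv2]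
  have : ((j : ℤ) + k * ((f j a : ℕ) : ℤ)) - ((j : ℤ) + k * ((a : ℕ) : ℤ))
      = k * (((f j a : ℕ) : ℤ) - ((a : ℕ) : ℤ)) := by ring
  rw [this]
  exact Int.modEq_zero_iff_dvd.2 (dvd_mul_right _ _)

lemma mp_mod {m k : ℕ} {π : Equiv.Perm (Fin (m * k))} (hπ : π ∈ MP (m * k) k 1)
    (x : Fin (m * k)) : (π x).val % k = x.val % k := by
  rw [MP, Finset.mem_filter] at hπ
  have h := hπ.2 x
  have h0 : (((1:ℕ):ℤ)) - 1 = 0 := by norm_num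
  rw [h0] at h
  have hdvd : (k : ℤ) ∣ ((π x : ℤ) - (x : ℤ)) := Int.modEq_zero_iff_dvd.1 h
  have h2 : (π x : ℤ) ≡ (x : ℤ) [ZMOD (k : ℤ)] := (Int.modEq_iff_dvd.2 hdvd).symm
  have h3 : ((π x).val : ℤ) % (k : ℤ) = (x.val : ℤ) % (k : ℤ) := by
    have hc1 : ((π x : Fin (m*k)) : ℤ) = ((π x).val : ℤ) := rfl
    have hc2 : ((x : Fin (m*k)) : ℤ) = (x.val : ℤ) := rfl
    rw [← hc1, ← hc2]
    exact h2
  exact_mod_cast h3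

lemma mp_snd {m k : ℕ} {π : Equiv.Perm (Fin (m * k))} (hπ : π ∈ MP (m * k) k 1)
    (a : Fin m) (j : Fin k) :
    (finProdFinEquiv.symm (π (finProdFinEquiv (a, j)))).2 = j := by
  have hy : π (finProdFinEquiv (a, j))
      = finProdFinEquiv (finProdFinEquiv.symm (π (finProdFinEquiv (a, j)))) :=
    (Equiv.apply_symm_apply _ _).symm
  set y := finProdFinEquiv.symm (π (finProdFinEquiv (a, j))) with hy'
  have hval : (π (finProdFinEquiv (a, j))).val = y.2.val + k * y.1.val := by
    rw [hy]
    exact finProdFinEquiv_apply_val _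
  have hmod := mp_mod hπ (finProdFinEquiv (a, j))
  rw [hval, finProdFinEquiv_apply_val (a, j)] at hmod
  simp only [Nat.add_mul_mod_self_left] at hmod
  have h1 : y.2.val % k = y.2.val := Nat.mod_eq_of_lt y.2.isLt
  have h2 : j.val % k = j.val := Nat.mod_eq_of_lt j.isLt
  rw [h1, h2] at hmod
  exact Fin.ext hmod

lemma exc_Psi {m k : ℕ} (hk : 0 < k) (f : Fin k → Equiv.Perm (Fin m)) :
    exc (Psi f) = ∑ j : Fin k, exc (f j) := by
  rw [exc_eq_sum]
  rw [← Equiv.sum_comp finProdFinEquiv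
    (fun x : Fin (m * k) => if x < Psi f x then 1 else 0)]
  have hcong : ∀ y : Fin m × Fin k,
      (if finProdFinEquiv y < Psi f (finProdFinEquiv y) then 1 else 0)
      = (if y.1 < f y.2 y.1 then 1 else 0) := by
    rintro ⟨a, j⟩
    rw [Psi_apply]
    congr 1
    simp only [eq_iff_iff, Fin.lt_def, finProdFinEquiv_apply_val]
    constructor
    · intro h
      have : k * a.val < k * (f j a).val := by omega
      exact lt_of_mul_lt_mul_left this (Nat.zero_le k)
    · intro h
      have : k * a.val < k * (f j a).val := mul_lt_mul_of_pos_left h hk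
      omega
  rw [Finset.sum_congr rfl fun y _ => hcong y, Fintype.sum_prod_type, Finset.sum_comm]
  exact Finset.sum_congr rfl fun j _ => (exc_eq_sum (f j)).symm


lemma Psi_inj {m k : ℕ} : Function.Injective (Psi (m := m) (k := k)) := by
  intro f f' h
  funext j
  apply Equiv.ext
  intro a
  have := congrArg (fun ρ : Equiv.Perm (Fin (m * k)) => ρ (finProdFinEquiv (a, j))) h
  simp only [Psi_apply] at this
  have := finProdFinEquiv.injective this
  exact (Prod.ext_iff.1 this).1

lemma Psi_surj {m k : ℕ} (π : Equiv.Perm (Fin (m * k))) (hπ : π ∈ MP (m * k) k 1) :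
    ∃ f : Fin k → Equiv.Perm (Fin m), Psi f = π := by
  set g : Fin k → Fin m → Fin m :=
    fun j a => (finProdFinEquiv.symm (π (finProdFinEquiv (a, j)))).1 with hg
  have hπeq : ∀ j a, π (finProdFinEquiv (a, j)) = finProdFinEquiv (g j a, j) := by
    intro j a
    conv_lhs => rw [← Equiv.apply_symm_apply finProdFinEquiv (π (finProdFinEquiv (a, j)))]
    exact congrArg finProdFinEquiv (Prod.ext rfl (mp_snd hπ a j))
  have hginj : ∀ j, Function.Injective (g j) := by
    intro j a a' h
    have h1 : π (finProdFinEquiv (a, j)) = π (finProdFinEquiv (a', j)) := by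
      rw [hπeq, hπeq, h]
    have h2 := finProdFinEquiv.injective (π.injective h1)
    exact (Prod.ext_iff.1 h2).1
  refine ⟨fun j => Equiv.ofBijective (g j) (Finite.injective_iff_bijective.1 (hginj j)), ?_⟩
  apply Equiv.ext
  intro x
  obtain ⟨⟨a, j⟩, rfl⟩ : ∃ y, finProdFinEquiv y = x :=
    ⟨finProdFinEquiv.symm x, Equiv.apply_symm_apply _ _⟩
  rw [Psi_apply, hπeq j a]
  rfl


theorem stmt10 (k m : ℕ) (hk : 0 < k) (hm : 0 < m) (n : ℕ) (hn : n = m * k) :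
    ∑ π ∈ MP n k 1, (X : ℚ[X]) ^ exc π = (Eulerian m) ^ k := by
  subst hn
  have h1 : ∑ π ∈ MP (m * k) k 1, (X : ℚ[X]) ^ exc π
      = ∑ f : Fin k → Equiv.Perm (Fin m), (X : ℚ[X]) ^ exc (Psi f) := by
    refine (Finset.sum_bij (fun f _ => Psi f) (fun f _ => Psi_mem f)
      (fun f _ f' _ h => Psi_inj h) ?_ (fun f _ => rfl)).symm
    intro π hπ
    obtain ⟨f, hf⟩ := Psi_surj π hπ
    exact ⟨f, Finset.mem_univ _, hf⟩
  rw [h1]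
  have h2 : ∀ f : Fin k → Equiv.Perm (Fin m), (X : ℚ[X]) ^ exc (Psi f)
      = ∏ j : Fin k, (X : ℚ[X]) ^ exc (f j) := by
    intro f
    rw [exc_Psi hk f, ← Finset.prod_pow_eq_pow_sum]
  rw [Finset.sum_congr rfl fun f _ => h2 f]
  have h3 : ∑ f : Fin k → Equiv.Perm (Fin m), ∏ j : Fin k, (X : ℚ[X]) ^ exc (f j)
      = ∏ j : Fin k, ∑ σ : Equiv.Perm (Fin m), (X : ℚ[X]) ^ exc σ := by
    rw [Finset.prod_univ_sum (fun _ => Finset.univ) (fun _ σ => (X : ℚ[X]) ^ exc σ)]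
    rw [Fintype.piFinset_univ]
  rw [h3, exc_des_sum m]
  rw [Finset.prod_const, Finset.card_univ, Fintype.card_fin]
  rfl
end

section
/- Let n, k be positive integers and let r be an integer with 2 ≤ r ≤ k. If k does not divide n, then the set MP_{n,r}^k is empty. -/
open Polynomial Finset

theorem stmt12 (n k r : ℕ) (hn : 0 < n) (hk : 0 < k) (hr1 : 2 ≤ r) (hr2 : r ≤ k)
    (hnd : ¬ k ∣ n) : MP n k r = ∅ := by
  by_contra hne
  obtain ⟨π, hπ⟩ := Finset.nonempty_iff_ne_empty.mpr hne
  rw [MP, Finset.mem_filter] at hπ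
  have hπ' := hπ.2
  -- the shift constant
  set c0 : ℕ := r - 1 with hc0
  have hc0pos : 0 < c0 := by omega
  have hc0lt : c0 < k := by omega
  set c : ZMod k := (c0 : ZMod k) with hc
  -- key pointwise congruence in `ZMod k`
  have hstep : ∀ i : Fin n, ((π i : ℕ) : ZMod k) = ((i : ℕ) : ZMod k) + c := by
    intro i
    have h1 := (ZMod.intCast_eq_intCast_iff _ _ k).mpr (hπ' i)
    have hc' : (c : ZMod k) = (r : ZMod k) - 1 := by
      rw [hc, hc0, Nat.cast_sub (by omega), Nat.cast_one]
    push_cast at h1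
    rw [hc']
    push_cast
    linear_combination h1
  -- residue-class counting function
  set M : ZMod k → ℕ := fun a => (Finset.univ.filter fun i : Fin n => ((i : ℕ) : ZMod k) = a).card
    with hM
  -- counts are invariant under adding c
  have key1 : ∀ a : ZMod k, M a = M (a + c) := by
    intro a
    apply Finset.card_bij' (fun i _ => π i) (fun j _ => π.symm j)
    · intro i hi
      rw [Finset.mem_filter] at hi ⊢
      refine ⟨Finset.mem_univ _, ?_⟩
      rw [hstep i, hi.2]
    · intro j hj
      rw [Finset.mem_filter] at hj ⊢
      refine ⟨Finset.mem_univ _, ?_⟩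
      have h2 := hstep (π.symm j)
      rw [Equiv.apply_symm_apply] at h2
      have := hj.2
      rw [h2] at this
      exact add_right_cancel this
    · intro i _; simp
    · intro j _; simp
  -- invariance under integer multiples of c
  have keyz : ∀ (z : ℤ) (a : ZMod k), M (a + z • c) = M a := by
    intro z
    induction z using Int.induction_on with
    | zero => intro a; simp
    | succ m ih =>
        intro a
        have : a + ((m : ℤ) + 1) • c = (a + (m : ℤ) • c) + c := by
          rw [add_smul, one_smul]; ring
        rw [this, ← key1, ih]
    | pred m ih =>
        intro a
        have : a + (-(m : ℤ) - 1) • c + c = a + (-(m : ℤ)) • c := by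
          rw [sub_smul, one_smul]; ring
        rw [← ih a, key1 (a + (-(m : ℤ) - 1) • c), this]
  set g : ℕ := Nat.gcd c0 k with hg
  have hgpos : 0 < g := Nat.gcd_pos_of_pos_right _ hk
  have hgdvd : g ∣ c0 := Nat.gcd_dvd_left _ _
  have hglt : g < k := lt_of_le_of_lt (Nat.le_of_dvd hc0pos hgdvd) hc0lt
  -- `g` is an integer multiple of `c` in `ZMod k`
  have hgc : ((g : ℕ) : ZMod k) = (Nat.gcdA c0 k) • c := by
    have hb := Nat.gcd_eq_gcd_ab c0 k
    have : ((Nat.gcd c0 k : ℤ) : ZMod k) = ((c0 * Nat.gcdA c0 k + k * Nat.gcdB c0 k : ℤ) : ZMod k) := by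
      rw [← hb]
    push_cast at this
    rw [ZMod.natCast_self, zero_mul, add_zero] at this
    rw [hg]
    push_cast
    rw [this, zsmul_eq_mul, hc]
    push_cast
    ring
  have keyg : ∀ a : ZMod k, M (a + (g : ZMod k)) = M a := by
    intro a; rw [hgc]; exact keyz _ a
  have keygm : ∀ (m : ℕ) (a : ZMod k), M (a + m • ((g : ℕ) : ZMod k)) = M a := by
    intro m
    induction m with
    | zero => intro a; simp
    | succ t ih =>
        intro a
        have : a + (t + 1) • ((g : ℕ) : ZMod k)
            = (a + t • ((g : ℕ) : ZMod k)) + (g : ZMod k) := by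
          rw [add_smul, one_smul]; ring
        rw [this, keyg, ih]
  -- compute M at natural values below k
  have Mval : ∀ j : ℕ, j < k → M ((j : ℕ) : ZMod k) = n / k + (if j < n % k then 1 else 0) := by
    intro j hj
    have h1 : M ((j : ℕ) : ZMod k)
        = (Finset.univ.filter fun i : Fin n => (i : ℕ) ≡ j [MOD k]).card := by
      simp only [hM, ZMod.natCast_eq_natCast_iff]
    have h2 : (Finset.univ.filter fun i : Fin n => (i : ℕ) ≡ j [MOD k]).card
        = ((Finset.range n).filter fun i : ℕ => i ≡ j [MOD k]).card := by
      apply Finset.card_bij (fun (i : Fin n) _ => (i : ℕ))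
      · intro i hi
        rw [Finset.mem_filter] at hi ⊢
        exact ⟨Finset.mem_range.mpr i.isLt, hi.2⟩
      · intro i _ j' _ h
        exact Fin.val_injective h
      · intro b hb
        rw [Finset.mem_filter, Finset.mem_range] at hb
        exact ⟨⟨b, hb.1⟩, Finset.mem_filter.mpr ⟨Finset.mem_univ _, hb.2⟩, rfl⟩
    have h3 := Nat.count_modEq_card n hk j
    rw [Nat.count_eq_card_filter_range] at h3
    have h4 : (fun x => x ≡ j [MOD k]) = fun i : ℕ => i ≡ j [MOD k] := rfl
    rw [h1, h2]
    rw [show ((Finset.range n).filter fun i : ℕ => i ≡ j [MOD k])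
        = {x ∈ Finset.range n | x ≡ j [MOD k]} from rfl] at *
    rw [h3, Nat.mod_eq_of_lt hj]
  set s : ℕ := n % k with hs
  have hspos : 0 < s := by
    rcases Nat.eq_zero_or_pos s with h | h
    · exact absurd (Nat.dvd_of_mod_eq_zero h) hnd
    · exact h
  have hslt : s < k := Nat.mod_lt _ hk
  -- M 0 = n/k + 1
  have hM0 : M ((0 : ℕ) : ZMod k) = n / k + 1 := by
    rw [Mval 0 hk, if_pos hspos]
  -- M g = M 0, hence g < s
  have hMg : M ((g : ℕ) : ZMod k) = M ((0 : ℕ) : ZMod k) := by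
    have := keyg 0
    rw [zero_add] at this
    rw [Nat.cast_zero]
    exact this
  have hgs : g < s := by
    by_contra hcon
    rw [Mval g hglt, if_neg (by omega), hM0] at hMg
    omega
  -- M s = M (s % g), contradiction
  have hsplit : ((s : ℕ) : ZMod k) = ((s % g : ℕ) : ZMod k) + (s / g) • ((g : ℕ) : ZMod k) := by
    have : s = s % g + (s / g) * g := (Nat.mod_add_div' s g).symm
    rw [nsmul_eq_mul]
    push_cast
    nth_rewrite 1 [this]
    push_cast
    ring
  have hMs : M ((s : ℕ) : ZMod k) = M ((s % g : ℕ) : ZMod k) := by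
    rw [hsplit]; exact keygm _ _
  have hmod : s % g < g := Nat.mod_lt _ hgpos
  rw [Mval s hslt, if_neg (by omega), Mval (s % g) (by omega), if_pos (by omega)] at hMs
  omega
end

section
/- Let f, g ∈ ℚ[t] and let a be a rational number such that both f + g and f - g are gamma-positive with center of symmetry a. Then for every positive integer r, the polynomials f^r + g^r and f^r - g^r are gamma-positive with center of symmetry r·a. -/
open Polynomial Finset

/-- A polynomial `f ∈ ℚ[t]` is gamma-positive with center of symmetry `c` if there are
nonnegative integers `r ≤ N` with `N + r = 2c` and nonnegative rationals `γ i` with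
`f = ∑_{i=0}^{⌊(N-r)/2⌋} γ i * t^(r+i) * (1+t)^(N-r-2i)`. -/
def GammaPositive (f : ℚ[X]) (c : ℚ) : Prop :=
  ∃ N r : ℕ, r ≤ N ∧ (N : ℚ) + (r : ℚ) = 2 * c ∧
    ∃ γ : ℕ → ℚ, (∀ i, 0 ≤ γ i) ∧
      f = ∑ i ∈ Finset.range ((N - r) / 2 + 1), C (γ i) * X ^ (r + i) * (1 + X) ^ (N - r - 2 * i)

/-- Auxiliary predicate: `f` has a gamma-nonnegative representation with parameters `N, r`. -/
def GRep (f : ℚ[X]) (N r : ℕ) : Prop :=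
  ∃ γ : ℕ → ℚ, (∀ i, 0 ≤ γ i) ∧
    f = ∑ i ∈ Finset.range ((N - r) / 2 + 1), C (γ i) * X ^ (r + i) * (1 + X) ^ (N - r - 2 * i)

lemma grep_zero (N r : ℕ) : GRep 0 N r :=
  ⟨0, fun _ => le_refl 0, by simp⟩

lemma grep_one : GRep 1 0 0 :=
  ⟨fun _ => 1, fun _ => zero_le_one, by simp⟩

lemma grep_add {f g : ℚ[X]} {N r : ℕ} (hf : GRep f N r) (hg : GRep g N r) : GRep (f + g) N r := by
  obtain ⟨γ1, h1, e1⟩ := hf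
  obtain ⟨γ2, h2, e2⟩ := hg
  refine ⟨fun i => γ1 i + γ2 i, fun i => add_nonneg (h1 i) (h2 i), ?_⟩
  rw [e1, e2, ← Finset.sum_add_distrib]
  refine Finset.sum_congr rfl fun i _ => ?_
  rw [C_add]; ring

lemma sum_shift {M d : ℕ} (G : ℕ → ℚ[X]) (F : ℕ → ℚ[X])
    (hF : ∀ k, d ≤ k → F k = G (k - d)) (hF0 : ∀ k, k < d → F k = 0) :
    ∑ k ∈ Finset.range (M + d), F k = ∑ i ∈ Finset.range M, G i := by
  induction M with
  | zero => simpa using Finset.sum_eq_zero fun k hk => hF0 k (by simpa using hk)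
  | succ M ih =>
      rw [show M + 1 + d = (M + d) + 1 from by omega, Finset.sum_range_succ,
        Finset.sum_range_succ, ih, hF (M + d) (by omega)]
      congr 2
      omega

lemma grep_shift {f : ℚ[X]} {N r : ℕ} (d : ℕ) (hd : d ≤ r) (hr : r ≤ N) (hf : GRep f N r) :
    GRep f (N + d) (r - d) := by
  obtain ⟨γ, hγ, e⟩ := hf
  refine ⟨fun k => if d ≤ k then γ (k - d) else 0, fun k => ?_, ?_⟩
  · dsimp only; split
    · exact hγ _
    · exact le_refl 0
  · have hrange : (N + d - (r - d)) / 2 + 1 = ((N - r) / 2 + 1) + d := by omega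
    rw [hrange, e]
    symm
    refine sum_shift _ _ (fun k hk => ?_) (fun k hk => ?_)
    · dsimp only
      have h1 : r - d + k = r + (k - d) := by omega
      have h2 : N + d - (r - d) - 2 * k = N - r - 2 * (k - d) := by omega
      rw [if_pos hk, h1, h2]
    · dsimp only
      rw [if_neg (by omega), C_0, zero_mul, zero_mul]

lemma grep_align {f : ℚ[X]} {N1 r1 N2 r2 : ℕ} (h : N1 + r1 = N2 + r2) (hr2 : r2 ≤ r1)
    (h1 : r1 ≤ N1) (hf : GRep f N1 r1) : GRep f N2 r2 := by
  have := grep_shift (r1 - r2) (by omega) h1 hf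
  rwa [show N1 + (r1 - r2) = N2 from by omega, show r1 - (r1 - r2) = r2 from by omega] at this

lemma grep_mul {f g : ℚ[X]} {N1 r1 N2 r2 : ℕ} (h1 : r1 ≤ N1) (h2 : r2 ≤ N2)
    (hf : GRep f N1 r1) (hg : GRep g N2 r2) : GRep (f * g) (N1 + N2) (r1 + r2) := by
  obtain ⟨γ1, hγ1, e1⟩ := hf
  obtain ⟨γ2, hγ2, e2⟩ := hg
  refine ⟨fun k => ∑ i ∈ Finset.range ((N1 - r1) / 2 + 1), ∑ j ∈ Finset.range ((N2 - r2) / 2 + 1),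
      if i + j = k then γ1 i * γ2 j else 0,
    fun k => Finset.sum_nonneg fun i _ => Finset.sum_nonneg fun j _ => ?_, ?_⟩
  · split
    · exact mul_nonneg (hγ1 i) (hγ2 j)
    · exact le_refl 0
  · rw [e1, e2, Finset.sum_mul_sum]
    symm
    have key : ∀ k ∈ Finset.range ((N1 + N2 - (r1 + r2)) / 2 + 1),
        C (∑ i ∈ Finset.range ((N1 - r1) / 2 + 1), ∑ j ∈ Finset.range ((N2 - r2) / 2 + 1),
          if i + j = k then γ1 i * γ2 j else 0) * X ^ (r1 + r2 + k) *
            (1 + X) ^ (N1 + N2 - (r1 + r2) - 2 * k)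
        = ∑ i ∈ Finset.range ((N1 - r1) / 2 + 1), ∑ j ∈ Finset.range ((N2 - r2) / 2 + 1),
          if i + j = k then
            C (γ1 i * γ2 j) * X ^ (r1 + r2 + k) * (1 + X) ^ (N1 + N2 - (r1 + r2) - 2 * k)
          else 0 := by
      intro k _
      rw [map_sum, Finset.sum_mul, Finset.sum_mul]
      refine Finset.sum_congr rfl fun i _ => ?_
      rw [map_sum, Finset.sum_mul, Finset.sum_mul]
      refine Finset.sum_congr rfl fun j _ => ?_
      split <;> simp
    calc
      ∑ k ∈ Finset.range ((N1 + N2 - (r1 + r2)) / 2 + 1),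
          C (∑ i ∈ Finset.range ((N1 - r1) / 2 + 1), ∑ j ∈ Finset.range ((N2 - r2) / 2 + 1),
            if i + j = k then γ1 i * γ2 j else 0) * X ^ (r1 + r2 + k) *
              (1 + X) ^ (N1 + N2 - (r1 + r2) - 2 * k)
        = ∑ k ∈ Finset.range ((N1 + N2 - (r1 + r2)) / 2 + 1),
            ∑ i ∈ Finset.range ((N1 - r1) / 2 + 1), ∑ j ∈ Finset.range ((N2 - r2) / 2 + 1),
              if i + j = k then
                C (γ1 i * γ2 j) * X ^ (r1 + r2 + k) * (1 + X) ^ (N1 + N2 - (r1 + r2) - 2 * k)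
              else 0 := Finset.sum_congr rfl key
      _ = ∑ i ∈ Finset.range ((N1 - r1) / 2 + 1), ∑ j ∈ Finset.range ((N2 - r2) / 2 + 1),
            ∑ k ∈ Finset.range ((N1 + N2 - (r1 + r2)) / 2 + 1),
              if i + j = k then
                C (γ1 i * γ2 j) * X ^ (r1 + r2 + k) * (1 + X) ^ (N1 + N2 - (r1 + r2) - 2 * k)
              else 0 := by
          rw [Finset.sum_comm]
          exact Finset.sum_congr rfl fun i _ => Finset.sum_comm
      _ = ∑ i ∈ Finset.range ((N1 - r1) / 2 + 1), ∑ j ∈ Finset.range ((N2 - r2) / 2 + 1),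
            (C (γ1 i) * X ^ (r1 + i) * (1 + X) ^ (N1 - r1 - 2 * i)) *
              (C (γ2 j) * X ^ (r2 + j) * (1 + X) ^ (N2 - r2 - 2 * j)) := by
          refine Finset.sum_congr rfl fun i hi => Finset.sum_congr rfl fun j hj => ?_
          simp only [Finset.mem_range] at hi hj
          have hmem : i + j ∈ Finset.range ((N1 + N2 - (r1 + r2)) / 2 + 1) := by
            simp only [Finset.mem_range]; omega
          rw [Finset.sum_ite_eq (Finset.range ((N1 + N2 - (r1 + r2)) / 2 + 1)) (i + j),
            if_pos hmem]
          have hx : r1 + r2 + (i + j) = (r1 + i) + (r2 + j) := by omega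
          have hy : N1 + N2 - (r1 + r2) - 2 * (i + j)
              = (N1 - r1 - 2 * i) + (N2 - r2 - 2 * j) := by omega
          rw [hx, hy, pow_add, pow_add, C_mul]
          ring

lemma gp_mul {f g : ℚ[X]} {c d : ℚ} (hf : GammaPositive f c) (hg : GammaPositive g d) :
    GammaPositive (f * g) (c + d) := by
  obtain ⟨N1, r1, h1, hc1, hrep1⟩ := hf
  obtain ⟨N2, r2, h2, hc2, hrep2⟩ := hg
  exact ⟨N1 + N2, r1 + r2, by omega, by push_cast; linarith, grep_mul h1 h2 hrep1 hrep2⟩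

lemma gp_one : GammaPositive 1 0 :=
  ⟨0, 0, le_refl 0, by norm_num, grep_one⟩

lemma gp_pow {f : ℚ[X]} {c : ℚ} (hf : GammaPositive f c) : ∀ n : ℕ,
    GammaPositive (f ^ n) ((n : ℚ) * c)
  | 0 => by simpa using gp_one
  | (n + 1) => by
      have h := gp_mul (gp_pow hf n) hf
      rw [← pow_succ] at h
      have h2 : ((n + 1 : ℕ) : ℚ) * c = (n : ℚ) * c + c := by push_cast; ring
      rw [h2]; exact h

lemma gp_add {f g : ℚ[X]} {c : ℚ} (hf : GammaPositive f c) (hg : GammaPositive g c) :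
    GammaPositive (f + g) c := by
  obtain ⟨N1, r1, h1, hc1, hrep1⟩ := hf
  obtain ⟨N2, r2, h2, hc2, hrep2⟩ := hg
  have hNr : N1 + r1 = N2 + r2 := by
    have := hc1.trans hc2.symm
    exact_mod_cast this
  rcases le_total r1 r2 with h | h
  · exact ⟨N1, r1, h1, hc1, grep_add hrep1 (grep_align (by omega) h h2 hrep2)⟩
  · exact ⟨N2, r2, h2, hc2, grep_add (grep_align (by omega) h h1 hrep1) hrep2⟩

lemma gp_smul {f : ℚ[X]} {c : ℚ} (q : ℚ) (hq : 0 ≤ q) (h : GammaPositive f c) :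
    GammaPositive (C q * f) c := by
  obtain ⟨N, r, h1, hc, γ, hγ, e⟩ := h
  refine ⟨N, r, h1, hc, fun i => q * γ i, fun i => mul_nonneg hq (hγ i), ?_⟩
  rw [e, Finset.mul_sum]
  refine Finset.sum_congr rfl fun i _ => ?_
  rw [C_mul]; ring

lemma gp_zero {N r : ℕ} (h : r ≤ N) {c : ℚ} (hc : (N : ℚ) + (r : ℚ) = 2 * c) :
    GammaPositive 0 c :=
  ⟨N, r, h, hc, grep_zero N r⟩

lemma gp_sum {ι : Type*} {c : ℚ} (s : Finset ι) (h : ι → ℚ[X]) (h0 : GammaPositive 0 c)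
    (hh : ∀ i ∈ s, GammaPositive (h i) c) : GammaPositive (∑ i ∈ s, h i) c := by
  classical
  induction s using Finset.induction with
  | empty => simpa using h0
  | insert _ _ hx ih =>
      rw [Finset.sum_insert hx]
      exact gp_add (hh _ (Finset.mem_insert_self _ _))
        (ih fun i hi => hh i (Finset.mem_insert_of_mem hi))

lemma gp_half {h : ℚ[X]} {c : ℚ} {n : ℕ} (H : GammaPositive ((2 : ℚ[X]) ^ n * h) c) :
    GammaPositive h c := by
  have h2 : (C ((2 : ℚ)⁻¹) * 2 : ℚ[X]) = 1 := by
    rw [show ((2 : ℚ[X])) = C 2 from (map_ofNat C 2).symm, ← map_mul]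
    norm_num
  have := gp_smul (((2 : ℚ)⁻¹) ^ n) (by positivity) H
  rwa [map_pow, ← mul_assoc, ← mul_pow, h2, one_pow, one_mul] at this

theorem stmt14 (f g : ℚ[X]) (a : ℚ)
    (hplus : GammaPositive (f + g) a) (hminus : GammaPositive (f - g) a) :
    ∀ r : ℕ, 0 < r →
      GammaPositive (f ^ r + g ^ r) (r * a) ∧ GammaPositive (f ^ r - g ^ r) (r * a) := by
  intro n _
  obtain ⟨N0, r0, hr0, hc0, -⟩ := id hplus
  have h0 : GammaPositive 0 ((n : ℚ) * a) := by
    refine gp_zero (N := n * N0) (r := n * r0) (Nat.mul_le_mul_left n hr0) ?_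
    push_cast
    linear_combination (n : ℚ) * hc0
  have key : ∀ k ∈ Finset.range (n + 1),
      GammaPositive ((f + g) ^ k * (f - g) ^ (n - k)) ((n : ℚ) * a) := by
    intro k hk
    simp only [Finset.mem_range] at hk
    have h := gp_mul (gp_pow hplus k) (gp_pow hminus (n - k))
    rwa [← add_mul, ← Nat.cast_add, show k + (n - k) = n from by omega] at h
  have hA : (2 : ℚ[X]) ^ n * f ^ n
      = ∑ k ∈ Finset.range (n + 1),
        (f + g) ^ k * (f - g) ^ (n - k) * (n.choose k : ℚ[X]) := by
    rw [← mul_pow, show (2 : ℚ[X]) * f = (f + g) + (f - g) from by ring, add_pow]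
  have hB : (2 : ℚ[X]) ^ n * g ^ n
      = ∑ k ∈ Finset.range (n + 1),
        (f + g) ^ k * (-(f - g)) ^ (n - k) * (n.choose k : ℚ[X]) := by
    rw [← mul_pow, show (2 : ℚ[X]) * g = (f + g) + (-(f - g)) from by ring, add_pow]
  constructor
  · refine gp_half (n := n) ?_
    have hsum : (2 : ℚ[X]) ^ n * (f ^ n + g ^ n)
        = ∑ k ∈ Finset.range (n + 1),
          C ((1 + (-1 : ℚ) ^ (n - k)) * (n.choose k : ℚ)) *
            ((f + g) ^ k * (f - g) ^ (n - k)) := by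
      rw [mul_add, hA, hB, ← Finset.sum_add_distrib]
      refine Finset.sum_congr rfl fun k _ => ?_
      rw [neg_pow]
      simp only [map_mul, map_add, map_one, map_pow, map_neg, C_1, C_eq_natCast]
      ring
    rw [hsum]
    refine gp_sum _ _ h0 fun k hk => gp_smul _ ?_ (key k hk)
    have hpm : (0 : ℚ) ≤ 1 + (-1 : ℚ) ^ (n - k) := by
      rcases Nat.even_or_odd (n - k) with h | h
      · rw [h.neg_one_pow]; norm_num
      · rw [h.neg_one_pow]; norm_num
    exact mul_nonneg hpm (by positivity)
  · refine gp_half (n := n) ?_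
    have hsum : (2 : ℚ[X]) ^ n * (f ^ n - g ^ n)
        = ∑ k ∈ Finset.range (n + 1),
          C ((1 - (-1 : ℚ) ^ (n - k)) * (n.choose k : ℚ)) *
            ((f + g) ^ k * (f - g) ^ (n - k)) := by
      rw [mul_sub, hA, hB, ← Finset.sum_sub_distrib]
      refine Finset.sum_congr rfl fun k _ => ?_
      rw [neg_pow]
      simp only [map_mul, map_sub, map_add, map_one, map_pow, map_neg, C_1, C_eq_natCast]
      ring
    rw [hsum]
    refine gp_sum _ _ h0 fun k hk => gp_smul _ ?_ (key k hk)
    have hpm : (0 : ℚ) ≤ 1 - (-1 : ℚ) ^ (n - k) := by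
      rcases Nat.even_or_odd (n - k) with h | h
      · rw [h.neg_one_pow]; norm_num
      · rw [h.neg_one_pow]; norm_num
    exact mul_nonneg hpm (by positivity)
end
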